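/- arXiv:1709.02872 — 5 statements merged into one kernel-verified Lean document; each statement's English description precedes it below -/
import Mathlib

section
/- Let x_1, ..., x_N be elements of a unital C*-algebra satisfying \sum_i x_i x_i* = \sum_i x_i* x_i = 1. Fix a permutation \sigma of {1,...,p} and exponent sequences e_1,...,e_p and f_1,...,f_p, where x^1 = x and x^* denotes the adjoint. Then the following are equivalent: (1) for all index tuples (i_1,...,i_p) in {1,...,N}^p, x_{i_1}^{e_1} ... x_{i_p}^{e_p} = x_{i_{\sigma(1)}}^{f_1} ... x_{i_{\sigma(p)}}^{f_p}; (2) \sum_{i_1,...,i_p} x_{i_1}^{e_1} ... x_{i_p}^{e_p} x_{i_{\sigma(p)}}^{\bar f_p} ... x_{i_{\sigma(1)}}^{\bar f_1} = 1, where \bar e denotes the involution swapping 1 and *. -/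
/-- `pw a e` is `a` when `e = true` and `star a` when `e = false`. -/
def pw {A : Type*} [Ring A] [StarRing A] (a : A) (e : Bool) : A :=
  if e then a else star a

lemma star_pw {A : Type*} [Ring A] [StarRing A] (a : A) (e : Bool) :
    star (pw a e) = pw a (!e) := by cases e <;> simp [pw]

lemma star_prod_ofFn {M : Type*} [Monoid M] [StarMul M] :
    ∀ (n : ℕ) (g : Fin n → M),
      star (List.ofFn g).prod = (List.ofFn fun k => star (g k.rev)).prod
  | 0, g => by simp
  | n + 1, g => by
    rw [List.ofFn_succ, List.prod_cons, star_mul,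
      star_prod_ofFn n (fun i => g i.succ),
      List.ofFn_succ' (fun k : Fin (n + 1) => star (g k.rev))]
    simp [Fin.rev_castSucc, Fin.rev_last]

lemma sum_pw_mul_star_pw {A : Type*} [Ring A] [StarRing A] {N : ℕ} (x : Fin N → A)
    (h1 : ∑ i, x i * star (x i) = 1) (h2 : ∑ i, star (x i) * x i = 1) (b : Bool) :
    ∑ a, pw (x a) b * star (pw (x a) b) = 1 := by
  cases b
  · simpa [pw] using h2
  · simpa [pw] using h1

lemma sum_ofFn_mul_star {A : Type*} [Ring A] [StarRing A] {N : ℕ} (x : Fin N → A)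
    (h1 : ∑ i, x i * star (x i) = 1) (h2 : ∑ i, star (x i) * x i = 1) :
    ∀ (p : ℕ) (e : Fin p → Bool),
      ∑ i : Fin p → Fin N,
        (List.ofFn fun k => pw (x (i k)) (e k)).prod *
          star (List.ofFn fun k => pw (x (i k)) (e k)).prod = 1
  | 0, e => by simp
  | p + 1, e => by
    have hIH := sum_ofFn_mul_star x h1 h2 p (fun k => e k.succ)
    rw [← Equiv.sum_comp (Fin.consEquiv fun _ : Fin (p + 1) => Fin N)
      (fun i : Fin (p + 1) → Fin N =>
        (List.ofFn fun k => pw (x (i k)) (e k)).prod *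
          star (List.ofFn fun k => pw (x (i k)) (e k)).prod), Fintype.sum_prod_type]
    have hsplit : ∀ (a : Fin N) (t : Fin p → Fin N),
        (List.ofFn fun k : Fin (p + 1) =>
            pw (x ((Fin.consEquiv fun _ : Fin (p + 1) => Fin N) (a, t) k)) (e k)).prod
          = pw (x a) (e 0) * (List.ofFn fun k : Fin p => pw (x (t k)) (e k.succ)).prod := by
      intro a t
      rw [List.ofFn_succ]
      simp [Fin.consEquiv]
    have hrow : ∀ a : Fin N,
        (∑ t : Fin p → Fin N,
          (List.ofFn fun k : Fin (p + 1) =>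
              pw (x ((Fin.consEquiv fun _ : Fin (p + 1) => Fin N) (a, t) k)) (e k)).prod *
            star (List.ofFn fun k : Fin (p + 1) =>
              pw (x ((Fin.consEquiv fun _ : Fin (p + 1) => Fin N) (a, t) k)) (e k)).prod)
          = pw (x a) (e 0) * star (pw (x a) (e 0)) := by
      intro a
      have step : ∀ t : Fin p → Fin N,
          (List.ofFn fun k : Fin (p + 1) =>
              pw (x ((Fin.consEquiv fun _ : Fin (p + 1) => Fin N) (a, t) k)) (e k)).prod *
            star (List.ofFn fun k : Fin (p + 1) =>
              pw (x ((Fin.consEquiv fun _ : Fin (p + 1) => Fin N) (a, t) k)) (e k)).prod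
          = pw (x a) (e 0) *
              (((List.ofFn fun k : Fin p => pw (x (t k)) (e k.succ)).prod *
                star (List.ofFn fun k : Fin p => pw (x (t k)) (e k.succ)).prod) *
                star (pw (x a) (e 0))) := by
        intro t
        rw [hsplit a t, star_mul]
        simp [mul_assoc]
      rw [Finset.sum_congr rfl fun t _ => step t, ← Finset.mul_sum, ← Finset.sum_mul, hIH,
        one_mul]
    rw [Finset.sum_congr rfl fun a _ => hrow a]
    exact sum_pw_mul_star_pw x h1 h2 (e 0)

lemma perm_iff_aux {A : Type*} [NormedRing A] [StarRing A] [CStarRing A]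
    [CompleteSpace A] [NormedAlgebra ℂ A] [StarModule ℂ A]
    {ι : Type*} [Fintype ι] (P Q : ι → A)
    (hPP : ∑ i, P i * star (P i) = 1) (hQQ : ∑ i, Q i * star (Q i) = 1) :
    (∀ i, P i = Q i) ↔ ∑ i, P i * star (Q i) = 1 := by
  letI : CStarAlgebra A := ⟨⟩
  constructor
  · intro h
    rw [show (∑ i, P i * star (Q i)) = ∑ i, P i * star (P i) from
      Finset.sum_congr rfl fun i _ => by rw [← h i]]
    exact hPP
  · intro hsum i
    have hQP : ∑ i, Q i * star (P i) = 1 := by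
      have := congrArg star hsum
      rw [star_sum] at this
      simpa [star_mul, star_star] using this
    have key : ∑ i, (P i - Q i) * star (P i - Q i) = 0 := by
      have expand : ∀ i, (P i - Q i) * star (P i - Q i)
          = (P i * star (P i) - P i * star (Q i)) - (Q i * star (P i) - Q i * star (Q i)) := by
        intro i
        rw [star_sub]
        noncomm_ring
      rw [Finset.sum_congr rfl fun i _ => expand i, Finset.sum_sub_distrib,
        Finset.sum_sub_distrib, Finset.sum_sub_distrib, hPP, hQQ, hQP, hsum]
      simp
    letI := CStarAlgebra.spectralOrder A
    haveI := CStarAlgebra.spectralOrderedRing A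
    have hi : (P i - Q i) * star (P i - Q i) = 0 :=
      (Finset.sum_eq_zero_iff_of_nonneg fun j _ => mul_star_self_nonneg _).mp key i
        (Finset.mem_univ i)
    exact sub_eq_zero.mp ((CStarRing.mul_star_self_eq_zero_iff (P i - Q i)).mp hi)

/-- Proposition 6.1: for elements `x₁,…,x_N` of a unital C*-algebra with
`∑ xᵢxᵢ* = ∑ xᵢ*xᵢ = 1`, a permutation `σ ∈ S_p` and exponents `e, f`,
the relations
`x_{i₁}^{e₁} ⋯ x_{i_p}^{e_p} = x_{i_{σ(1)}}^{f₁} ⋯ x_{i_{σ(p)}}^{f_p}` (for all tuples `i`)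
are equivalent to
`∑_{i₁…i_p} x_{i₁}^{e₁} ⋯ x_{i_p}^{e_p} x_{i_{σ(p)}}^{\bar f_p} ⋯ x_{i_{σ(1)}}^{\bar f_1} = 1`. -/
theorem perm_relations_iff_sum_eq_one {A : Type*} [NormedRing A] [StarRing A] [CStarRing A]
    [CompleteSpace A] [NormedAlgebra ℂ A] [StarModule ℂ A]
    {N p : ℕ} (x : Fin N → A)
    (h1 : ∑ i, x i * star (x i) = 1) (h2 : ∑ i, star (x i) * x i = 1)
    (σ : Equiv.Perm (Fin p)) (e f : Fin p → Bool) :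
    (∀ i : Fin p → Fin N,
      (List.ofFn fun k => pw (x (i k)) (e k)).prod
        = (List.ofFn fun k => pw (x (i (σ k))) (f k)).prod)
    ↔ ∑ i : Fin p → Fin N,
        (List.ofFn fun k => pw (x (i k)) (e k)).prod *
          (List.ofFn fun k => pw (x (i (σ k.rev))) (!(f k.rev))).prod = 1 := by
  have hstarQ : ∀ i : Fin p → Fin N,
      (List.ofFn fun k : Fin p => pw (x (i (σ k.rev))) (!(f k.rev))).prod
        = star (List.ofFn fun k : Fin p => pw (x (i (σ k))) (f k)).prod := by
    intro i
    simp only [star_prod_ofFn, star_pw]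
  simp only [hstarQ]
  have hPP : ∑ i : Fin p → Fin N,
      (List.ofFn fun k => pw (x (i k)) (e k)).prod *
        star (List.ofFn fun k => pw (x (i k)) (e k)).prod = 1 :=
    sum_ofFn_mul_star x h1 h2 p e
  have hQQ : ∑ i : Fin p → Fin N,
      (List.ofFn fun k => pw (x (i (σ k))) (f k)).prod *
        star (List.ofFn fun k => pw (x (i (σ k))) (f k)).prod = 1 := by
    have hcomp := Equiv.sum_comp (Equiv.arrowCongr σ.symm (Equiv.refl (Fin N)))
      (fun j : Fin p → Fin N =>
        (List.ofFn fun k => pw (x (j k)) (f k)).prod *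
          star (List.ofFn fun k => pw (x (j k)) (f k)).prod)
    rw [sum_ofFn_mul_star x h1 h2 p f] at hcomp
    rw [← hcomp]
    apply Finset.sum_congr rfl
    intro i _
    rfl
  exact perm_iff_aux
    (fun i : Fin p → Fin N => (List.ofFn fun k => pw (x (i k)) (e k)).prod)
    (fun i : Fin p → Fin N => (List.ofFn fun k => pw (x (i (σ k))) (f k)).prod)
    hPP hQQ
end

section
/- Transposing two adjacent points of a perfect matching of {1,...,2n} that lie in different blocks changes the parity of the number of crossings of the matching. -/
/-- The number of crossings of a perfect matching of `{1,…,k}`, encoded as a fixed-point-free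
involution `π`: pairs of blocks `{a, π a}`, `{c, π c}` with `a < c < π a < π c`. -/
def crossings {k : ℕ} (π : Equiv.Perm (Fin k)) : ℕ :=
  (Finset.univ.filter fun q : Fin k × Fin k => q.1 < q.2 ∧ q.2 < π q.1 ∧ π q.1 < π q.2).card

lemma count_aux' {α : Type*} [Fintype α] (P Q : α → Prop) [DecidablePred P] [DecidablePred Q] :
    (Finset.univ.filter P).card + (Finset.univ.filter Q).card
      = (Finset.univ.filter fun q => ¬(P q ↔ Q q)).card
        + 2 * (Finset.univ.filter fun q => P q ∧ Q q).card := by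
  simp only [Finset.card_filter]
  rw [Finset.mul_sum, ← Finset.sum_add_distrib, ← Finset.sum_add_distrib]
  refine Finset.sum_congr rfl fun x _ => ?_
  by_cases hP : P x <;> by_cases hQ : Q x <;> simp [hP, hQ]


/-- Classification of a point `z` (with partner `u = π z`) of the matching relative to the
four special points `M, M+1, A = π M, B = π (M+1)`, recording the values of the swap. -/
def crossCls (M A B z u sz su : ℕ) : Prop :=
  (z = M ∧ u = A ∧ sz = M + 1 ∧ su = A) ∨
  (z = M + 1 ∧ u = B ∧ sz = M ∧ su = B) ∨
  (z = A ∧ u = M ∧ sz = A ∧ su = M + 1) ∨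
  (z = B ∧ u = M + 1 ∧ sz = B ∧ su = M) ∨
  (z ≠ M ∧ z ≠ M + 1 ∧ z ≠ A ∧ z ≠ B ∧ u ≠ M ∧ u ≠ M + 1 ∧ u ≠ A ∧ u ≠ B ∧
    sz = z ∧ su = u)

section PtLemmas

variable (M A B X Y U V SX SY SU SV W1 W2 : ℕ)

lemma pt1 (hA1 : A ≠ M) (hA2 : A ≠ M + 1) (hB1 : B ≠ M) (hB2 : B ≠ M + 1) (hAB : A ≠ B)
    (h1 : crossCls M A B X U SX SU) (h2 : crossCls M A B Y V SY SV)
    (H : A < M ∧ B < M ∧ A < B ∧ W1 = A ∧ W2 = B) :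
    ¬((X < Y ∧ Y < U ∧ U < V) ↔ (SX < SY ∧ SY < SU ∧ SU < SV)) ↔ (X = W1 ∧ Y = W2) := by
  unfold crossCls at h1 h2; omega

lemma pt2 (hA1 : A ≠ M) (hA2 : A ≠ M + 1) (hB1 : B ≠ M) (hB2 : B ≠ M + 1) (hAB : A ≠ B)
    (h1 : crossCls M A B X U SX SU) (h2 : crossCls M A B Y V SY SV)
    (H : A < M ∧ B < M ∧ B < A ∧ W1 = B ∧ W2 = A) :
    ¬((X < Y ∧ Y < U ∧ U < V) ↔ (SX < SY ∧ SY < SU ∧ SU < SV)) ↔ (X = W1 ∧ Y = W2) := by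
  unfold crossCls at h1 h2; omega

lemma pt3 (hA1 : A ≠ M) (hA2 : A ≠ M + 1) (hB1 : B ≠ M) (hB2 : B ≠ M + 1) (hAB : A ≠ B)
    (h1 : crossCls M A B X U SX SU) (h2 : crossCls M A B Y V SY SV)
    (H : A < M ∧ M + 1 < B ∧ W1 = A ∧ W2 = M + 1) :
    ¬((X < Y ∧ Y < U ∧ U < V) ↔ (SX < SY ∧ SY < SU ∧ SU < SV)) ↔ (X = W1 ∧ Y = W2) := by
  unfold crossCls at h1 h2; omega

lemma pt4 (hA1 : A ≠ M) (hA2 : A ≠ M + 1) (hB1 : B ≠ M) (hB2 : B ≠ M + 1) (hAB : A ≠ B)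
    (h1 : crossCls M A B X U SX SU) (h2 : crossCls M A B Y V SY SV)
    (H : M + 1 < A ∧ B < M ∧ W1 = B ∧ W2 = M) :
    ¬((X < Y ∧ Y < U ∧ U < V) ↔ (SX < SY ∧ SY < SU ∧ SU < SV)) ↔ (X = W1 ∧ Y = W2) := by
  unfold crossCls at h1 h2; omega

lemma pt5 (hA1 : A ≠ M) (hA2 : A ≠ M + 1) (hB1 : B ≠ M) (hB2 : B ≠ M + 1) (hAB : A ≠ B)
    (h1 : crossCls M A B X U SX SU) (h2 : crossCls M A B Y V SY SV)
    (H : M + 1 < A ∧ M + 1 < B ∧ A < B ∧ W1 = M ∧ W2 = M + 1) :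
    ¬((X < Y ∧ Y < U ∧ U < V) ↔ (SX < SY ∧ SY < SU ∧ SU < SV)) ↔ (X = W1 ∧ Y = W2) := by
  unfold crossCls at h1 h2; omega

lemma pt6 (hA1 : A ≠ M) (hA2 : A ≠ M + 1) (hB1 : B ≠ M) (hB2 : B ≠ M + 1) (hAB : A ≠ B)
    (h1 : crossCls M A B X U SX SU) (h2 : crossCls M A B Y V SY SV)
    (H : M + 1 < A ∧ M + 1 < B ∧ B < A ∧ W1 = M + 1 ∧ W2 = M) :
    ¬((X < Y ∧ Y < U ∧ U < V) ↔ (SX < SY ∧ SY < SU ∧ SU < SV)) ↔ (X = W1 ∧ Y = W2) := by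
  unfold crossCls at h1 h2; omega

lemma ptAll (hA1 : A ≠ M) (hA2 : A ≠ M + 1) (hB1 : B ≠ M) (hB2 : B ≠ M + 1) (hAB : A ≠ B)
    (h1 : crossCls M A B X U SX SU) (h2 : crossCls M A B Y V SY SV)
    (H : (A < M ∧ B < M ∧ A < B ∧ W1 = A ∧ W2 = B) ∨
         (A < M ∧ B < M ∧ B < A ∧ W1 = B ∧ W2 = A) ∨
         (A < M ∧ M + 1 < B ∧ W1 = A ∧ W2 = M + 1) ∨
         (M + 1 < A ∧ B < M ∧ W1 = B ∧ W2 = M) ∨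
         (M + 1 < A ∧ M + 1 < B ∧ A < B ∧ W1 = M ∧ W2 = M + 1) ∨
         (M + 1 < A ∧ M + 1 < B ∧ B < A ∧ W1 = M + 1 ∧ W2 = M)) :
    ¬((X < Y ∧ Y < U ∧ U < V) ↔ (SX < SY ∧ SY < SU ∧ SU < SV)) ↔ (X = W1 ∧ Y = W2) := by
  rcases H with H | H | H | H | H | H
  · exact pt1 M A B X Y U V SX SY SU SV W1 W2 hA1 hA2 hB1 hB2 hAB h1 h2 H
  · exact pt2 M A B X Y U V SX SY SU SV W1 W2 hA1 hA2 hB1 hB2 hAB h1 h2 H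
  · exact pt3 M A B X Y U V SX SY SU SV W1 W2 hA1 hA2 hB1 hB2 hAB h1 h2 H
  · exact pt4 M A B X Y U V SX SY SU SV W1 W2 hA1 hA2 hB1 hB2 hAB h1 h2 H
  · exact pt5 M A B X Y U V SX SY SU SV W1 W2 hA1 hA2 hB1 hB2 hAB h1 h2 H
  · exact pt6 M A B X Y U V SX SY SU SV W1 W2 hA1 hA2 hB1 hB2 hAB h1 h2 H

end PtLemmas

set_option maxHeartbeats 2000000 in
/-- Transposing two adjacent points `m, m+1` of a perfect matching of `{1,…,2n}` that lie
in different blocks changes the parity of the number of crossings. -/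
theorem switch_changes_crossing_parity {n : ℕ} (π : Equiv.Perm (Fin (2 * n)))
    (hinv : ∀ i, π (π i) = i) (hfix : ∀ i, π i ≠ i)
    (m : Fin (2 * n)) (hm : (m : ℕ) + 1 < 2 * n)
    (hdiff : π m ≠ ⟨(m : ℕ) + 1, hm⟩) :
    crossings (Equiv.swap m ⟨(m : ℕ) + 1, hm⟩ * π * Equiv.swap m ⟨(m : ℕ) + 1, hm⟩) % 2
      ≠ crossings π % 2 := by
  classical
  set m' : Fin (2 * n) := ⟨(m : ℕ) + 1, hm⟩ with hm'def
  set s : Equiv.Perm (Fin (2 * n)) := Equiv.swap m m' with hs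
  have hm'val : (m' : ℕ) = (m : ℕ) + 1 := rfl
  -- basic facts
  have hrel : ∀ z w : Fin (2 * n), π z = w ↔ z = π w := by
    intro z w
    constructor
    · rintro rfl; exact (hinv z).symm
    · rintro rfl; exact hinv w
  have hfm : π m ≠ m := hfix m
  have hfm' : π m' ≠ m' := hfix m'
  have hbm : π m' ≠ m := by
    intro h
    exact hdiff ((hrel m' m).mp h).symm
  have hav : ((π m : Fin (2 * n)) : ℕ) ≠ (m : ℕ) := fun h => hfm (Fin.ext h)
  have hav' : ((π m : Fin (2 * n)) : ℕ) ≠ (m : ℕ) + 1 := fun h => hdiff (Fin.ext h)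
  have hbv' : ((π m' : Fin (2 * n)) : ℕ) ≠ (m : ℕ) + 1 := fun h => hfm' (Fin.ext h)
  have hbv : ((π m' : Fin (2 * n)) : ℕ) ≠ (m : ℕ) := fun h => hbm (Fin.ext h)
  have habv : ((π m : Fin (2 * n)) : ℕ) ≠ ((π m' : Fin (2 * n)) : ℕ) := by
    intro h
    have : m = m' := π.injective (Fin.ext h)
    exact absurd (congrArg Fin.val this) (by simp [hm'val])
  -- classification of a point `z` relative to m, m', π m, π m', with all relevant values
  have hclass : ∀ z : Fin (2 * n),
      ((z : ℕ) = (m : ℕ) ∧ ((π z : Fin (2 * n)) : ℕ) = ((π m : Fin (2 * n)) : ℕ) ∧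
        ((s z : Fin (2 * n)) : ℕ) = (m : ℕ) + 1 ∧
        ((s (π z) : Fin (2 * n)) : ℕ) = ((π m : Fin (2 * n)) : ℕ)) ∨
      ((z : ℕ) = (m : ℕ) + 1 ∧ ((π z : Fin (2 * n)) : ℕ) = ((π m' : Fin (2 * n)) : ℕ) ∧
        ((s z : Fin (2 * n)) : ℕ) = (m : ℕ) ∧
        ((s (π z) : Fin (2 * n)) : ℕ) = ((π m' : Fin (2 * n)) : ℕ)) ∨
      ((z : ℕ) = ((π m : Fin (2 * n)) : ℕ) ∧ ((π z : Fin (2 * n)) : ℕ) = (m : ℕ) ∧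
        ((s z : Fin (2 * n)) : ℕ) = ((π m : Fin (2 * n)) : ℕ) ∧
        ((s (π z) : Fin (2 * n)) : ℕ) = (m : ℕ) + 1) ∨
      ((z : ℕ) = ((π m' : Fin (2 * n)) : ℕ) ∧ ((π z : Fin (2 * n)) : ℕ) = (m : ℕ) + 1 ∧
        ((s z : Fin (2 * n)) : ℕ) = ((π m' : Fin (2 * n)) : ℕ) ∧
        ((s (π z) : Fin (2 * n)) : ℕ) = (m : ℕ)) ∨
      ((z : ℕ) ≠ (m : ℕ) ∧ (z : ℕ) ≠ (m : ℕ) + 1 ∧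
        (z : ℕ) ≠ ((π m : Fin (2 * n)) : ℕ) ∧ (z : ℕ) ≠ ((π m' : Fin (2 * n)) : ℕ) ∧
        ((π z : Fin (2 * n)) : ℕ) ≠ (m : ℕ) ∧ ((π z : Fin (2 * n)) : ℕ) ≠ (m : ℕ) + 1 ∧
        ((π z : Fin (2 * n)) : ℕ) ≠ ((π m : Fin (2 * n)) : ℕ) ∧
        ((π z : Fin (2 * n)) : ℕ) ≠ ((π m' : Fin (2 * n)) : ℕ) ∧
        ((s z : Fin (2 * n)) : ℕ) = (z : ℕ) ∧
        ((s (π z) : Fin (2 * n)) : ℕ) = ((π z : Fin (2 * n)) : ℕ)) := by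
    intro z
    rcases eq_or_ne z m with rfl | h1
    · left
      refine ⟨rfl, rfl, ?_, ?_⟩
      · rw [hs, Equiv.swap_apply_left, hm'val]
      · rw [hs, Equiv.swap_apply_of_ne_of_ne hfm hdiff]
    · rcases eq_or_ne z m' with rfl | h2
      · right; left
        refine ⟨rfl, rfl, ?_, ?_⟩
        · rw [hs, Equiv.swap_apply_right]
        · rw [hs, Equiv.swap_apply_of_ne_of_ne hbm hfm']
      · rcases eq_or_ne z (π m) with rfl | h3
        · right; right; left
          refine ⟨rfl, ?_, ?_, ?_⟩
          · rw [hinv]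
          · rw [hs, Equiv.swap_apply_of_ne_of_ne h1 h2]
          · rw [hinv, hs, Equiv.swap_apply_left, hm'val]
        · rcases eq_or_ne z (π m') with rfl | h4
          · right; right; right; left
            refine ⟨rfl, ?_, ?_, ?_⟩
            · rw [hinv, hm'val]
            · rw [hs, Equiv.swap_apply_of_ne_of_ne h1 h2]
            · rw [hinv, hs, Equiv.swap_apply_right]
          · right; right; right; right
            have h5 : π z ≠ m := fun h => h3 ((hrel z m).mp h)
            have h6 : π z ≠ m' := fun h => h4 ((hrel z m').mp h)
            have h7 : π z ≠ π m := fun h => h1 (π.injective h)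
            have h8 : π z ≠ π m' := fun h => h2 (π.injective h)
            exact ⟨fun h => h1 (Fin.ext h), fun h => h2 (Fin.ext (h.trans hm'val.symm)),
              fun h => h3 (Fin.ext h), fun h => h4 (Fin.ext h),
              fun h => h5 (Fin.ext h), fun h => h6 (Fin.ext (h.trans hm'val.symm)),
              fun h => h7 (Fin.ext h), fun h => h8 (Fin.ext h),
              by rw [hs, Equiv.swap_apply_of_ne_of_ne h1 h2],
              by rw [hs, Equiv.swap_apply_of_ne_of_ne h5 h6]⟩
  -- the set of pairs on which the two crossing conditions disagree is a singleton
  have tail : ∀ w1 w2 : Fin (2 * n),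
      ((((π m : Fin (2 * n)) : ℕ) < (m : ℕ) ∧ ((π m' : Fin (2 * n)) : ℕ) < (m : ℕ) ∧
          ((π m : Fin (2 * n)) : ℕ) < ((π m' : Fin (2 * n)) : ℕ) ∧
          (w1 : ℕ) = ((π m : Fin (2 * n)) : ℕ) ∧ (w2 : ℕ) = ((π m' : Fin (2 * n)) : ℕ)) ∨
        (((π m : Fin (2 * n)) : ℕ) < (m : ℕ) ∧ ((π m' : Fin (2 * n)) : ℕ) < (m : ℕ) ∧
          ((π m' : Fin (2 * n)) : ℕ) < ((π m : Fin (2 * n)) : ℕ) ∧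
          (w1 : ℕ) = ((π m' : Fin (2 * n)) : ℕ) ∧ (w2 : ℕ) = ((π m : Fin (2 * n)) : ℕ)) ∨
        (((π m : Fin (2 * n)) : ℕ) < (m : ℕ) ∧ (m : ℕ) + 1 < ((π m' : Fin (2 * n)) : ℕ) ∧
          (w1 : ℕ) = ((π m : Fin (2 * n)) : ℕ) ∧ (w2 : ℕ) = (m : ℕ) + 1) ∨
        ((m : ℕ) + 1 < ((π m : Fin (2 * n)) : ℕ) ∧ ((π m' : Fin (2 * n)) : ℕ) < (m : ℕ) ∧
          (w1 : ℕ) = ((π m' : Fin (2 * n)) : ℕ) ∧ (w2 : ℕ) = (m : ℕ)) ∨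
        ((m : ℕ) + 1 < ((π m : Fin (2 * n)) : ℕ) ∧ (m : ℕ) + 1 < ((π m' : Fin (2 * n)) : ℕ) ∧
          ((π m : Fin (2 * n)) : ℕ) < ((π m' : Fin (2 * n)) : ℕ) ∧
          (w1 : ℕ) = (m : ℕ) ∧ (w2 : ℕ) = (m : ℕ) + 1) ∨
        ((m : ℕ) + 1 < ((π m : Fin (2 * n)) : ℕ) ∧ (m : ℕ) + 1 < ((π m' : Fin (2 * n)) : ℕ) ∧
          ((π m' : Fin (2 * n)) : ℕ) < ((π m : Fin (2 * n)) : ℕ) ∧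
          (w1 : ℕ) = (m : ℕ) + 1 ∧ (w2 : ℕ) = (m : ℕ))) →
      (Finset.univ.filter fun q : Fin (2 * n) × Fin (2 * n) =>
          ¬((q.1 < q.2 ∧ q.2 < π q.1 ∧ π q.1 < π q.2) ↔
            (s q.1 < s q.2 ∧ s q.2 < s (π q.1) ∧ s (π q.1) < s (π q.2))))
        = {(w1, w2)} := by
    intro w1 w2 H
    ext ⟨x, y⟩
    simp only [Finset.mem_filter, Finset.mem_univ, true_and, Finset.mem_singleton,
      Prod.mk.injEq, Fin.lt_def, Fin.ext_iff]
    exact ptAll (m : ℕ) ((π m : Fin (2 * n)) : ℕ) ((π m' : Fin (2 * n)) : ℕ)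
      (x : ℕ) (y : ℕ) ((π x : Fin (2 * n)) : ℕ) ((π y : Fin (2 * n)) : ℕ)
      ((s x : Fin (2 * n)) : ℕ) ((s y : Fin (2 * n)) : ℕ)
      ((s (π x) : Fin (2 * n)) : ℕ) ((s (π y) : Fin (2 * n)) : ℕ)
      (w1 : ℕ) (w2 : ℕ) hav hav' hbv hbv' habv (hclass x) (hclass y) H
  -- position case analysis to pick the singleton
  obtain ⟨w1, w2, hD⟩ : ∃ w1 w2 : Fin (2 * n),
      (Finset.univ.filter fun q : Fin (2 * n) × Fin (2 * n) =>
          ¬((q.1 < q.2 ∧ q.2 < π q.1 ∧ π q.1 < π q.2) ↔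
            (s q.1 < s q.2 ∧ s q.2 < s (π q.1) ∧ s (π q.1) < s (π q.2))))
        = {(w1, w2)} := by
    have hA : ((π m : Fin (2 * n)) : ℕ) < (m : ℕ) ∨ (m : ℕ) + 1 < ((π m : Fin (2 * n)) : ℕ) := by
      omega
    have hB : ((π m' : Fin (2 * n)) : ℕ) < (m : ℕ) ∨ (m : ℕ) + 1 < ((π m' : Fin (2 * n)) : ℕ) := by
      omega
    rcases hA with hA | hA <;> rcases hB with hB | hB
    · rcases habv.lt_or_gt with hAB | hAB
      · exact ⟨π m, π m', tail _ _ (Or.inl ⟨hA, hB, hAB, rfl, rfl⟩)⟩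
      · exact ⟨π m', π m, tail _ _ (Or.inr (Or.inl ⟨hA, hB, hAB, rfl, rfl⟩))⟩
    · exact ⟨π m, m', tail _ _ (Or.inr (Or.inr (Or.inl ⟨hA, hB, rfl, rfl⟩)))⟩
    · exact ⟨π m', m, tail _ _ (Or.inr (Or.inr (Or.inr (Or.inl ⟨hA, hB, rfl, rfl⟩))))⟩
    · rcases habv.lt_or_gt with hAB | hAB
      · exact ⟨m, m', tail _ _ (Or.inr (Or.inr (Or.inr (Or.inr (Or.inl ⟨hA, hB, hAB, rfl, rfl⟩)))))⟩
      · exact ⟨m', m, tail _ _ (Or.inr (Or.inr (Or.inr (Or.inr (Or.inr ⟨hA, hB, hAB, rfl, rfl⟩)))))⟩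
  -- transport crossings of the conjugated permutation along the swap
  have hbij : crossings (s * π * s)
      = (Finset.univ.filter fun q : Fin (2 * n) × Fin (2 * n) =>
          s q.1 < s q.2 ∧ s q.2 < s (π q.1) ∧ s (π q.1) < s (π q.2)).card := by
    unfold crossings
    rw [show (Finset.univ.filter fun q : Fin (2 * n) × Fin (2 * n) =>
        q.1 < q.2 ∧ q.2 < (s * π * s) q.1 ∧ (s * π * s) q.1 < (s * π * s) q.2)
      = (Finset.univ.filter fun q : Fin (2 * n) × Fin (2 * n) =>
          s q.1 < s q.2 ∧ s q.2 < s (π q.1) ∧ s (π q.1) < s (π q.2)).map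
          (Equiv.prodCongr s s).toEmbedding from ?_]
    · rw [Finset.card_map]
    · ext q
      rw [Finset.mem_map_equiv]
      simp only [Finset.mem_filter, Finset.mem_univ, true_and, Equiv.prodCongr_symm,
        Equiv.prodCongr_apply, Prod.map_fst, Prod.map_snd, Equiv.Perm.mul_apply, hs,
        Equiv.symm_swap, Equiv.swap_apply_self]
  have hcnt := count_aux' (fun q : Fin (2 * n) × Fin (2 * n) =>
      q.1 < q.2 ∧ q.2 < π q.1 ∧ π q.1 < π q.2)
    (fun q : Fin (2 * n) × Fin (2 * n) =>
      s q.1 < s q.2 ∧ s q.2 < s (π q.1) ∧ s (π q.1) < s (π q.2))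
  rw [hD, Finset.card_singleton] at hcnt
  have hc1 : crossings π = (Finset.univ.filter fun q : Fin (2 * n) × Fin (2 * n) =>
      q.1 < q.2 ∧ q.2 < π q.1 ∧ π q.1 < π q.2).card := rfl
  omega
end

section
/- If every block of a partition \pi of a finite set has even size, and \sigma is obtained from a noncrossing partition by merging blocks to produce \pi, with all blocks of the noncrossing partition of even size, then the signature \varepsilon(\pi) = 1. Concretely: for a partition of {1,...,2n} all of whose blocks have even size and which is obtained from a noncrossing even partition by merging some of its blocks, the minimal number of adjacent switches (of points in different blocks) needed to make it noncrossing is even. -/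
/-- A partition (setoid) of `{1,…,n}` is noncrossing when there are no points
`a < b < c < d` with `a ∼ c`, `b ∼ d`, but `a ≁ b`. -/
def NCross {n : ℕ} (π : Setoid (Fin n)) : Prop :=
  ¬ ∃ a b c d : Fin n, a < b ∧ b < c ∧ c < d ∧ π.r a c ∧ π.r b d ∧ ¬ π.r a b

/-- A switch: exchanging two adjacent points `m, m+1` lying in different blocks. -/
def SwitchStep {n : ℕ} (π π' : Setoid (Fin n)) : Prop :=
  ∃ (m : Fin n) (h : (m : ℕ) + 1 < n),
    ¬ π.r m ⟨(m : ℕ) + 1, h⟩ ∧ π' = Setoid.comap (Equiv.swap m ⟨(m : ℕ) + 1, h⟩) π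

/-- `ReachesNC π c` : `π` can be transformed into a noncrossing partition by `c` switches. -/
def ReachesNC {n : ℕ} (π : Setoid (Fin n)) (c : ℕ) : Prop :=
  ∃ f : Fin (c + 1) → Setoid (Fin n),
    f 0 = π ∧ NCross (f (Fin.last c)) ∧
      ∀ i : Fin c, SwitchStep (f i.castSucc) (f i.succ)

section EpsilonAux

open Classical Finset

variable {N : ℕ}

noncomputable def blkS (π : Setoid (Fin N)) (x : Fin N) : Finset (Fin N) :=
  Finset.univ.filter fun y => π.r x y

lemma mem_blkS {π : Setoid (Fin N)} {x y : Fin N} : y ∈ blkS π x ↔ π.r x y := by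
  simp [blkS]

lemma self_mem_blkS (π : Setoid (Fin N)) (x : Fin N) : x ∈ blkS π x :=
  mem_blkS.2 (π.refl' x)

lemma blkS_eq_of_r {π : Setoid (Fin N)} {x y : Fin N} (h : π.r x y) : blkS π x = blkS π y := by
  ext z; simp only [mem_blkS]
  exact ⟨fun hz => π.trans' (π.symm' h) hz, fun hz => π.trans' h hz⟩

noncomputable def mbl (π : Setoid (Fin N)) (x : Fin N) : Fin N :=
  (blkS π x).min' ⟨x, self_mem_blkS π x⟩

lemma r_mbl (π : Setoid (Fin N)) (x : Fin N) : π.r x (mbl π x) :=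
  mem_blkS.1 ((blkS π x).min'_mem _)

lemma mbl_le (π : Setoid (Fin N)) (x : Fin N) : mbl π x ≤ x :=
  Finset.min'_le _ _ (self_mem_blkS π x)

lemma mbl_le_of_r {π : Setoid (Fin N)} {x y : Fin N} (h : π.r x y) : mbl π x ≤ y :=
  Finset.min'_le _ _ (mem_blkS.2 h)

lemma mbl_eq_of_r {π : Setoid (Fin N)} {x y : Fin N} (h : π.r x y) : mbl π x = mbl π y := by
  unfold mbl; congr 1; exact blkS_eq_of_r h

lemma r_of_mbl_eq {π : Setoid (Fin N)} {x y : Fin N} (h : mbl π x = mbl π y) : π.r x y := by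
  have h1 := r_mbl π x
  have h2 := r_mbl π y
  rw [h] at h1
  exact π.trans' h1 (π.symm' h2)

noncomputable def Jet (π : Setoid (Fin N)) : Finset (Fin N × Fin N) :=
  Finset.univ.filter fun q => q.1 < q.2 ∧ ¬ π.r q.1 q.2 ∧ mbl π q.1 < mbl π q.2

noncomputable def Jn (π : Setoid (Fin N)) : ℕ := (Jet π).card

lemma twoblock_even (σ : Setoid (Fin N)) (hNC : NCross σ)
    (heven : ∀ x, Even (Finset.univ.filter fun y => σ.r x y).card)
    (D E : Finset (Fin N)) (dd ee : Fin N)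
    (hD : D = Finset.univ.filter fun y => σ.r dd y)
    (hE : E = Finset.univ.filter fun y => σ.r ee y)
    (hne : ¬ σ.r dd ee) :
    Even ((D ×ˢ E).filter fun q : Fin N × Fin N => q.1 < q.2).card := by
  have hmemD : ∀ {z}, z ∈ D ↔ σ.r dd z := by intro z; simp [hD]
  have hmemE : ∀ {z}, z ∈ E ↔ σ.r ee z := by intro z; simp [hE]
  have hdisj : ∀ z, z ∈ D → z ∈ E → False := by
    intro z h1 h2
    exact hne (σ.trans' (hmemD.1 h1) (σ.symm' (hmemE.1 h2)))
  have hrD : ∀ {u1 u2}, u1 ∈ D → u2 ∈ D → σ.r u1 u2 := fun h1 h2 =>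
    σ.trans' (σ.symm' (hmemD.1 h1)) (hmemD.1 h2)
  have hrE : ∀ {u1 u2}, u1 ∈ E → u2 ∈ E → σ.r u1 u2 := fun h1 h2 =>
    σ.trans' (σ.symm' (hmemE.1 h1)) (hmemE.1 h2)
  have hnr : ∀ {u z}, u ∈ D → z ∈ E → ¬ σ.r u z := by
    intro u z hu hz hr
    exact hne (σ.trans' (hmemD.1 hu) (σ.trans' hr (σ.symm' (hmemE.1 hz))))
  have hDcard : Even D.card := by rw [hD]; exact heven dd
  have hEcard : Even E.card := by rw [hE]; exact heven ee
  set S := (D ×ˢ E).filter fun q : Fin N × Fin N => q.1 < q.2 with hS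
  by_cases hA : ∀ v1 ∈ E, ∀ v2 ∈ E, (D.filter fun u => u < v1).card = (D.filter fun u => u < v2).card
  · -- snd fiberwise
    have hcard : S.card = ∑ v ∈ E, (S.filter fun q => q.2 = v).card := by
      apply Finset.card_eq_sum_card_fiberwise
      intro q hq
      exact (Finset.mem_product.1 (Finset.mem_filter.1 hq).1).2
    have hfib : ∀ v ∈ E, (S.filter fun q => q.2 = v).card = (D.filter fun u => u < v).card := by
      intro v hv
      have : (S.filter fun q => q.2 = v) = (D.filter fun u => u < v) ×ˢ {v} := by
        ext ⟨a, b⟩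
        simp only [hS, Finset.mem_filter, Finset.mem_product, Finset.mem_singleton]
        constructor
        · rintro ⟨⟨⟨ha, hb⟩, hlt⟩, rfl⟩; exact ⟨⟨ha, hlt⟩, rfl⟩
        · rintro ⟨⟨ha, hlt⟩, rfl⟩; exact ⟨⟨⟨ha, hv⟩, hlt⟩, rfl⟩
      rw [this, Finset.card_product, Finset.card_singleton, mul_one]
    rcases Finset.eq_empty_or_nonempty E with hEe | ⟨e0, he0⟩
    · simp [hcard, hEe]
    · have : S.card = ∑ v ∈ E, (D.filter fun u => u < e0).card := by
        rw [hcard]; apply Finset.sum_congr rfl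
        intro v hv; rw [hfib v hv]; exact hA v hv e0 he0
      rw [this, Finset.sum_const, smul_eq_mul]
      exact hEcard.mul_right _
  · push_neg at hA
    obtain ⟨v1, hv1, v2, hv2, hLne⟩ := hA
    -- wlog L v1 < L v2
    have key : ∀ w1 ∈ E, ∀ w2 ∈ E,
        (D.filter fun u => u < w1).card < (D.filter fun u => u < w2).card →
        ∃ u0 ∈ D, w1 < u0 ∧ u0 < w2 := by
      intro w1 hw1 w2 hw2 hlt
      by_contra hco
      push_neg at hco
      have hsub : (D.filter fun u => u < w2) ⊆ (D.filter fun u => u < w1) := by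
        intro u hu
        obtain ⟨huD, hu2⟩ := Finset.mem_filter.1 hu
        refine Finset.mem_filter.2 ⟨huD, ?_⟩
        rcases lt_trichotomy u w1 with h | h | h
        · exact h
        · exact absurd (h ▸ huD) (fun hh => hdisj u hh (h ▸ hw1))
        · exact absurd (Fin.lt_def.1 hu2) (Nat.not_lt.2 (hco u huD h))
      exact absurd (Finset.card_le_card hsub) (by omega)
    have hu0 : ∃ u0 ∈ D, ∃ w1 ∈ E, ∃ w2 ∈ E, w1 < u0 ∧ u0 < w2 := by
      rcases Ne.lt_or_gt hLne with h | h
      · obtain ⟨u0, hu0, h1, h2⟩ := key v1 hv1 v2 hv2 h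
        exact ⟨u0, hu0, v1, hv1, v2, hv2, h1, h2⟩
      · obtain ⟨u0, hu0, h1, h2⟩ := key v2 hv2 v1 hv1 h
        exact ⟨u0, hu0, v2, hv2, v1, hv1, h1, h2⟩
    obtain ⟨u0, hu0, w1, hw1, w2, hw2, hw1u, huw2⟩ := hu0
    -- M constant on D
    have hM : ∀ u1 ∈ D, ∀ u2 ∈ D, (E.filter fun z => u1 < z).card = (E.filter fun z => u2 < z).card := by
      by_contra hco
      push_neg at hco
      obtain ⟨u1, hu1, u2, hu2, hMne⟩ := hco
      have key2 : ∀ x1 ∈ D, ∀ x2 ∈ D,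
          (E.filter fun z => x1 < z).card < (E.filter fun z => x2 < z).card →
          ∃ z0 ∈ E, x2 < z0 ∧ z0 < x1 := by
        intro x1 hx1 x2 hx2 hlt
        by_contra hco2
        push_neg at hco2
        have hsub : (E.filter fun z => x2 < z) ⊆ (E.filter fun z => x1 < z) := by
          intro z hz
          obtain ⟨hzE, hz2⟩ := Finset.mem_filter.1 hz
          refine Finset.mem_filter.2 ⟨hzE, ?_⟩
          rcases lt_trichotomy x1 z with h | h | h
          · exact h
          · exact (hdisj z (h ▸ hx1) hzE).elim
          · exact absurd (Fin.lt_def.1 h) (Nat.not_lt.2 (hco2 z hzE hz2))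
        exact absurd (Finset.card_le_card hsub) (by omega)
      have hz0 : ∃ z0 ∈ E, ∃ x1 ∈ D, ∃ x2 ∈ D, x1 < z0 ∧ z0 < x2 := by
        rcases Ne.lt_or_gt hMne with h | h
        · obtain ⟨z0, hz0, h1, h2⟩ := key2 u1 hu1 u2 hu2 h
          exact ⟨z0, hz0, u2, hu2, u1, hu1, h1, h2⟩
        · obtain ⟨z0, hz0, h1, h2⟩ := key2 u2 hu2 u1 hu1 h
          exact ⟨z0, hz0, u1, hu1, u2, hu2, h1, h2⟩
      obtain ⟨z0, hz0, x1, hx1, x2, hx2, hx1z, hzx2⟩ := hz0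
      rcases lt_trichotomy z0 u0 with h | h | h
      · exact hNC ⟨x1, z0, u0, w2, hx1z, h, huw2, hrD hx1 hu0, hrE hz0 hw2, hnr hx1 hz0⟩
      · exact hdisj u0 hu0 (h ▸ hz0)
      · exact hNC ⟨w1, u0, z0, x2, hw1u, h, hzx2, hrE hw1 hz0, hrD hu0 hx2, fun hr => hnr hu0 hw1 (σ.symm' hr)⟩
    -- fst fiberwise
    have hcard : S.card = ∑ u ∈ D, (S.filter fun q => q.1 = u).card := by
      apply Finset.card_eq_sum_card_fiberwise
      intro q hq
      exact (Finset.mem_product.1 (Finset.mem_filter.1 hq).1).1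
    have hfib : ∀ u ∈ D, (S.filter fun q => q.1 = u).card = (E.filter fun z => u < z).card := by
      intro u hu
      have : (S.filter fun q => q.1 = u) = {u} ×ˢ (E.filter fun z => u < z) := by
        ext ⟨a, b⟩
        simp only [hS, Finset.mem_filter, Finset.mem_product, Finset.mem_singleton]
        constructor
        · rintro ⟨⟨⟨ha, hb⟩, hlt⟩, rfl⟩; exact ⟨rfl, hb, hlt⟩
        · rintro ⟨rfl, hb, hlt⟩; exact ⟨⟨⟨hu, hb⟩, hlt⟩, rfl⟩
      rw [this, Finset.card_product, Finset.card_singleton, one_mul]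
    have : S.card = ∑ u ∈ D, (E.filter fun z => u0 < z).card := by
      rw [hcard]; apply Finset.sum_congr rfl
      intro u hu; rw [hfib u hu]; exact hM u hu u0 hu0
    rw [this, Finset.sum_const, smul_eq_mul]
    exact hDcard.mul_right _
lemma Jn_even_of_merge (π σ : Setoid (Fin N)) (hNC : NCross σ)
    (hσe : ∀ x, Even (Finset.univ.filter fun y => σ.r x y).card)
    (hle : σ ≤ π) : Even (Jn π) := by
  rw [Jn]
  have hcard : (Jet π).card = ∑ p ∈ (Finset.univ ×ˢ Finset.univ : Finset (Fin N × Fin N)),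
      ((Jet π).filter fun q => (mbl σ q.1, mbl σ q.2) = p).card :=
    Finset.card_eq_sum_card_fiberwise
      (fun q _ => Finset.mem_product.2 ⟨Finset.mem_univ _, Finset.mem_univ _⟩)
  rw [hcard]
  apply Finset.even_sum
  rintro ⟨a, b⟩ -
  rcases Finset.eq_empty_or_nonempty
      ((Jet π).filter fun q => (mbl σ q.1, mbl σ q.2) = (a, b)) with he | ⟨⟨u0, v0⟩, hq0⟩
  · rw [he]; exact Even.zero
  · obtain ⟨hq0J, hab⟩ := Finset.mem_filter.1 hq0
    obtain ⟨ha, hb⟩ : mbl σ u0 = a ∧ mbl σ v0 = b := Prod.mk.injEq .. ▸ Prod.mk.inj hab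
    obtain ⟨-, ⟨hlt0, hnr0, hmbl0⟩⟩ := Finset.mem_filter.1 hq0J
    dsimp only at hlt0 hnr0 hmbl0
    have hrua : σ.r u0 a := ha ▸ r_mbl σ u0
    have hrvb : σ.r v0 b := hb ▸ r_mbl σ v0
    have hnab : ¬ σ.r a b := by
      intro hr
      exact hnr0 (hle (σ.trans' hrua (σ.trans' hr (σ.symm' hrvb))))
    have hset : ((Jet π).filter fun q => (mbl σ q.1, mbl σ q.2) = (a, b)) =
        ((Finset.univ.filter fun y => σ.r a y) ×ˢ (Finset.univ.filter fun y => σ.r b y)).filter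
          fun q : Fin N × Fin N => q.1 < q.2 := by
      ext ⟨u, v⟩
      simp only [Finset.mem_filter, Finset.mem_product, Jet, Finset.mem_univ, true_and,
        Prod.mk.injEq]
      constructor
      · rintro ⟨⟨hlt, hnr, hmbl⟩, hma, hmb⟩
        exact ⟨⟨σ.symm' (hma ▸ r_mbl σ u), σ.symm' (hmb ▸ r_mbl σ v)⟩, hlt⟩
      · rintro ⟨⟨hau, hbv⟩, hlt⟩
        have hru0u : σ.r u0 u := σ.trans' hrua hau
        have hrv0v : σ.r v0 v := σ.trans' hrvb hbv
        have hma : mbl σ u = a := by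
          rw [mbl_eq_of_r (σ.symm' hru0u), ha]
        have hmb : mbl σ v = b := by
          rw [mbl_eq_of_r (σ.symm' hrv0v), hb]
        refine ⟨⟨hlt, ?_, ?_⟩, hma, hmb⟩
        · intro hr
          exact hnr0 (π.trans' (hle hru0u) (π.trans' hr (π.symm' (hle hrv0v))))
        · rwa [mbl_eq_of_r (hle hru0u), mbl_eq_of_r (hle hrv0v)] at hmbl0
    rw [hset]
    exact twoblock_even σ hNC hσe _ _ a b rfl rfl hnab


lemma parity_helper {α : Type*} [Fintype α] (p q : α → Prop)
    (ip : DecidablePred p) (iq : DecidablePred q)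
    (ipq : DecidablePred fun a => ¬ (p a ↔ q a)) :
    ((@Finset.filter _ p ip Finset.univ).card + (@Finset.filter _ q iq Finset.univ).card) % 2
      = (@Finset.filter _ _ ipq Finset.univ).card % 2 := by
  classical
  rw [Finset.filter_congr_decidable, Finset.filter_congr_decidable,
    Finset.filter_congr_decidable]
  have h1 : (Finset.univ.filter p).card
      = (Finset.univ.filter fun a => p a ∧ q a).card
        + (Finset.univ.filter fun a => p a ∧ ¬ q a).card := by
    rw [← Finset.filter_filter, ← Finset.filter_filter,
      Finset.card_filter_add_card_filter_not]
  have h2 : (Finset.univ.filter q).card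
      = (Finset.univ.filter fun a => q a ∧ p a).card
        + (Finset.univ.filter fun a => q a ∧ ¬ p a).card := by
    rw [← Finset.filter_filter, ← Finset.filter_filter,
      Finset.card_filter_add_card_filter_not]
  have h3 : (Finset.univ.filter fun a => q a ∧ p a) = (Finset.univ.filter fun a => p a ∧ q a) := by
    ext a; simp only [Finset.mem_filter]; tauto
  have h4 : (Finset.univ.filter fun a => ¬ (p a ↔ q a))
      = (Finset.univ.filter fun a => p a ∧ ¬ q a) ∪ (Finset.univ.filter fun a => q a ∧ ¬ p a) := by
    ext a; simp only [Finset.mem_filter, Finset.mem_union]; tauto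
  have h5 : Disjoint (Finset.univ.filter fun a => p a ∧ ¬ q a)
      (Finset.univ.filter fun a => q a ∧ ¬ p a) := by
    rw [Finset.disjoint_left]
    intro a ha hb
    simp only [Finset.mem_filter] at ha hb
    tauto
  rw [h1, h2, h3, h4, Finset.card_union_of_disjoint h5]
  omega

lemma Jn_flip (π π' : Setoid (Fin N))
    (he : ∀ x, Even (Finset.univ.filter fun y => π.r x y).card)
    (hs : SwitchStep π π') : (Jn π' + Jn π) % 2 = 1 := by
  obtain ⟨m, h, hmr, rfl⟩ := hs
  set m' : Fin N := ⟨(m : ℕ) + 1, h⟩ with hm'def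
  set s : Equiv.Perm (Fin N) := Equiv.swap m m' with hsdef
  set τ := Setoid.comap s π with hτdef
  have hmm' : m < m' := by simp [hm'def, Fin.lt_def]
  have hmm'ne : m ≠ m' := ne_of_lt hmm'
  have hss : ∀ x, s (s x) = x := fun x => Equiv.swap_apply_self m m' x
  have hsm : s m = m' := Equiv.swap_apply_left m m'
  have hsm' : s m' = m := Equiv.swap_apply_right m m'
  have hso : ∀ x : Fin N, x ≠ m → x ≠ m' → s x = x := fun x h1 h2 =>
    Equiv.swap_apply_of_ne_of_ne h1 h2
  have hτr : ∀ x y, τ.r x y ↔ π.r (s x) (s y) := fun _ _ => Iff.rfl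
  have hBC : ¬ π.r m m' := hmr
  have hCB : ¬ π.r m' m := fun hr => hBC (π.symm' hr)
  set PA : Fin N × Fin N → Prop :=
    fun q => s q.1 < s q.2 ∧ ¬ π.r q.1 q.2 ∧ mbl τ (s q.1) < mbl τ (s q.2) with hPAdef
  set PB : Fin N × Fin N → Prop :=
    fun q => q.1 < q.2 ∧ ¬ π.r q.1 q.2 ∧ mbl π q.1 < mbl π q.2 with hPBdef
  -- Step A : Jn τ = card filter PA
  have stepA : Jn τ = (Finset.univ.filter PA).card := by
    rw [Jn, Jet]
    apply Finset.card_nbij' (fun q => (s q.1, s q.2)) (fun q => (s q.1, s q.2))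
    · rintro ⟨x, y⟩ hq
      obtain ⟨-, h1, h2, h3⟩ := Finset.mem_filter.1 hq
      refine Finset.mem_filter.2 ⟨Finset.mem_univ _, ?_, ?_, ?_⟩
      · simpa [hss] using h1
      · intro hr
        exact h2 (by simpa [hτr, hss] using hr)
      · simpa [hss] using h3
    · rintro ⟨x, y⟩ hq
      obtain ⟨-, h1, h2, h3⟩ := Finset.mem_filter.1 hq
      refine Finset.mem_filter.2 ⟨Finset.mem_univ _, h1, ?_, h3⟩
      intro hr
      exact h2 (by simpa [hτr, hss] using hr)
    · rintro ⟨x, y⟩ -; simp [hss]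
    · rintro ⟨x, y⟩ -; simp [hss]
  have stepB : Jn π = (Finset.univ.filter PB).card := rfl
  rw [stepA, stepB]
  refine (parity_helper PA PB _ _ (fun a => propDecidable _)).trans ?_
  -- basic values
  set b0 := mbl π m with hb0def
  set c0 := mbl π m' with hc0def
  have hb0le : b0 ≤ m := mbl_le π m
  have hc0le : c0 ≤ m' := mbl_le π m'
  have hrb0 : π.r m b0 := r_mbl π m
  have hrc0 : π.r m' c0 := r_mbl π m'
  have hb0m' : b0 ≠ m' := fun hq => absurd hmm' (not_lt.2 (hq ▸ hb0le))
  have hc0m : c0 ≠ m := fun hq => hCB (hq ▸ hrc0)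
  have hb0c0 : b0 ≠ c0 := fun hq => hBC (r_of_mbl_eq (show mbl π m = mbl π m' from hq))
  have hvne : ∀ a b : Fin N, a ≠ b → (a : ℕ) ≠ (b : ℕ) := fun a b hab hv => hab (Fin.ext hv)
  have hm'v : (m' : ℕ) = (m : ℕ) + 1 := rfl
  -- the swap on values
  have hsv : ∀ z : Fin N, ((s z : Fin N) : ℕ)
      = if (z : ℕ) = (m : ℕ) then (m : ℕ) + 1 else if (z : ℕ) = (m' : ℕ) then (m : ℕ) else (z : ℕ) := by
    intro z
    by_cases hzm : z = m
    · subst hzm; rw [hsm]; simp [hm'v]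
    · by_cases hzm' : z = m'
      · subst hzm'; rw [hsm', if_neg (hvne _ _ hzm), if_pos rfl]
      · rw [hso z hzm hzm', if_neg (hvne _ _ hzm), if_neg (hvne _ _ hzm')]
  have horder : ∀ x y : Fin N, (x ≠ m ∨ y ≠ m') → (x ≠ m' ∨ y ≠ m) → (s x < s y ↔ x < y) := by
    intro x y h1 h2
    have e1 := hsv x; have e2 := hsv y
    have d1 : (x : ℕ) ≠ (m : ℕ) ∨ (y : ℕ) ≠ (m' : ℕ) := h1.imp (hvne x m) (hvne y m')
    have d2 : (x : ℕ) ≠ (m' : ℕ) ∨ (y : ℕ) ≠ (m : ℕ) := h2.imp (hvne x m') (hvne y m)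
    rw [hm'v] at d1 d2 e1 e2
    rw [Fin.lt_def, Fin.lt_def, e1, e2]
    split_ifs <;> omega
  -- block of a point under τ ∘ s
  have himg : ∀ u, blkS τ (s u) = (blkS π u).image ⇑s := by
    intro u
    ext y
    simp only [mem_blkS, Finset.mem_image]
    constructor
    · intro hy
      refine ⟨s y, ?_, hss y⟩
      have := (hτr (s u) y).1 hy
      rwa [hss] at this
    · rintro ⟨x, hx, rfl⟩
      rw [hτr, hss, hss]
      exact hx
  have hmin : ∀ (A B : Finset (Fin N)) (hA : A.Nonempty) (hB : B.Nonempty),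
      A = B → A.min' hA = B.min' hB := by
    rintro A B hA hB rfl; rfl
  have hconst : ∀ u v, π.r u v → mbl τ (s u) = mbl τ (s v) := by
    intro u v huv
    unfold mbl
    apply hmin
    rw [himg, himg, blkS_eq_of_r huv]
  have hvalgen : ∀ (u v : Fin N), v ∈ (blkS π u).image ⇑s →
      (∀ w ∈ (blkS π u).image ⇑s, v ≤ w) → mbl τ (s u) = v := by
    intro u v hv hw
    have h1 : mbl τ (s u) = ((blkS π u).image ⇑s).min' ⟨v, hv⟩ := by
      unfold mbl; exact hmin _ _ _ _ (himg u)
    rw [h1]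
    exact le_antisymm (Finset.min'_le _ _ hv) (Finset.le_min' _ _ _ hw)
  -- values of mbl τ (s ·)
  have hout : ∀ u, ¬ π.r u m → ¬ π.r u m' → mbl τ (s u) = mbl π u := by
    intro u h1 h2
    apply hvalgen
    · refine Finset.mem_image.2 ⟨mbl π u, mem_blkS.2 (r_mbl π u), ?_⟩
      exact hso _ (fun hq => h1 (hq ▸ r_mbl π u)) (fun hq => h2 (hq ▸ r_mbl π u))
    · rintro w hw
      obtain ⟨x, hx, rfl⟩ := Finset.mem_image.1 hw
      have hxm : x ≠ m := fun hq => h1 (hq ▸ mem_blkS.1 hx)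
      have hxm' : x ≠ m' := fun hq => h2 (hq ▸ mem_blkS.1 hx)
      rw [hso x hxm hxm']
      exact mbl_le_of_r (mem_blkS.1 hx)
  have hmbsm1 : b0 ≠ m → mbl τ (s m) = b0 := by
    intro hb
    apply hvalgen
    · exact Finset.mem_image.2 ⟨b0, mem_blkS.2 hrb0, hso _ hb hb0m'⟩
    · rintro w hw
      obtain ⟨x, hx, rfl⟩ := Finset.mem_image.1 hw
      by_cases hxm : x = m
      · subst hxm; rw [hsm]; exact le_of_lt (lt_of_le_of_lt hb0le hmm')
      · have hxm' : x ≠ m' := fun hq => hBC (hq ▸ mem_blkS.1 hx)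
        rw [hso x hxm hxm']
        exact mbl_le_of_r (mem_blkS.1 hx)
  have hmbsm2 : b0 = m → mbl τ (s m) = m' := by
    intro hb
    apply hvalgen
    · exact Finset.mem_image.2 ⟨m, self_mem_blkS π m, hsm⟩
    · rintro w hw
      obtain ⟨x, hx, rfl⟩ := Finset.mem_image.1 hw
      by_cases hxm : x = m
      · subst hxm; rw [hsm]
      · have hxm' : x ≠ m' := fun hq => hBC (hq ▸ mem_blkS.1 hx)
        rw [hso x hxm hxm']
        have h1 : m ≤ x := hb ▸ mbl_le_of_r (mem_blkS.1 hx)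
        rw [Fin.le_def, hm'v]
        have := hvne x m hxm
        rw [Fin.le_def] at h1
        omega
  have hmbsm'1 : c0 ≠ m' → mbl τ (s m') = c0 := by
    intro hcc
    apply hvalgen
    · exact Finset.mem_image.2 ⟨c0, mem_blkS.2 hrc0, hso _ hc0m hcc⟩
    · rintro w hw
      obtain ⟨x, hx, rfl⟩ := Finset.mem_image.1 hw
      by_cases hxm' : x = m'
      · subst hxm'; rw [hsm']
        have := hvne c0 m' hcc
        rw [Fin.le_def]
        rw [Fin.le_def, hm'v] at hc0le
        omega
      · have hxm : x ≠ m := fun hq => hCB (hq ▸ mem_blkS.1 hx)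
        rw [hso x hxm hxm']
        exact mbl_le_of_r (mem_blkS.1 hx)
  have hmbsm'2 : c0 = m' → mbl τ (s m') = m := by
    intro hcc
    apply hvalgen
    · exact Finset.mem_image.2 ⟨m', self_mem_blkS π m', hsm'⟩
    · rintro w hw
      obtain ⟨x, hx, rfl⟩ := Finset.mem_image.1 hw
      by_cases hxm' : x = m'
      · subst hxm'; rw [hsm']
      · have hxm : x ≠ m := fun hq => hCB (hq ▸ mem_blkS.1 hx)
        rw [hso x hxm hxm']
        have h1 : c0 ≤ x := mbl_le_of_r (mem_blkS.1 hx)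
        exact le_of_lt (lt_of_lt_of_le hmm' (hcc ▸ h1))
  -- value of mbl π at block members
  have hmblB : ∀ z, π.r m z → mbl π z = b0 := fun z hz => (mbl_eq_of_r (π.symm' hz))
  have hmblC : ∀ z, π.r m' z → mbl π z = c0 := fun z hz => (mbl_eq_of_r (π.symm' hz))
  have hmblne : ∀ z v, mbl π z = v → π.r z v := fun z v hz => hz ▸ r_mbl π z
  -- truth values at the two special pairs
  have hPAmm' : ¬ PA (m, m') := by
    simp only [hPAdef]
    rintro ⟨h1, -, -⟩
    rw [hsm, hsm'] at h1
    exact absurd h1 (not_lt.2 hmm'.le)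
  have hPBm'm : ¬ PB (m', m) := by
    simp only [hPBdef]
    rintro ⟨h1, -, -⟩
    exact absurd h1 (not_lt.2 hmm'.le)
  have hPAm'm : PA (m', m) ↔ mbl τ (s m') < mbl τ (s m) := by
    simp only [hPAdef]
    constructor
    · rintro ⟨-, -, h3⟩; exact h3
    · intro h3
      refine ⟨?_, hCB, h3⟩
      rw [hsm, hsm']; exact hmm'
  have hPBmm' : PB (m, m') ↔ b0 < c0 := by
    simp only [hPBdef]
    constructor
    · rintro ⟨-, -, h3⟩; exact h3
    · intro h3; exact ⟨hmm', hBC, h3⟩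
  -- a generic equivalence for non-special pairs
  have hgen : ∀ x y : Fin N, ¬ (x = m ∧ y = m') → ¬ (x = m' ∧ y = m) →
      (¬ π.r x y → (mbl τ (s x) < mbl τ (s y) ↔ mbl π x < mbl π y)) → (PA (x, y) ↔ PB (x, y)) := by
    intro x y hn1 hn2 hmid
    have ho := horder x y (not_and_or.1 hn1) (not_and_or.1 hn2)
    simp only [hPAdef, hPBdef]
    constructor
    · rintro ⟨h1, h2, h3⟩; exact ⟨ho.1 h1, h2, (hmid h2).1 h3⟩
    · rintro ⟨h1, h2, h3⟩; exact ⟨ho.2 h1, h2, (hmid h2).2 h3⟩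
  by_cases hb : b0 = m
  · by_cases hcc : c0 = m'
    · -- CASE 4 : b0 = m, c0 = m'
      have hdisjBC : ∀ z, π.r m z → π.r m' z → False := fun z h1 h2 =>
        hBC (π.trans' h1 (π.symm' h2))
      have heq : ∀ z, ¬ π.r m z → ¬ π.r m' z → mbl τ (s z) = mbl π z := fun z h1 h2 =>
        hout z (fun hr => h1 (π.symm' hr)) (fun hr => h2 (π.symm' hr))
      have hvB1 : ∀ z, π.r m z → mbl π z = m := fun z hz => (hmblB z hz).trans hb
      have hvB2 : ∀ z, π.r m z → mbl τ (s z) = m' := fun z hz =>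
        (hconst z m (π.symm' hz)).trans (hmbsm2 hb)
      have hvC1 : ∀ z, π.r m' z → mbl π z = m' := fun z hz => (hmblC z hz).trans hcc
      have hvC2 : ∀ z, π.r m' z → mbl τ (s z) = m := fun z hz =>
        (hconst z m' (π.symm' hz)).trans (hmbsm'2 hcc)
      have hnotB : ∀ z, ¬ π.r m z → mbl π z ≠ m := fun z hz hq => hz (π.symm' (hmblne z m hq))
      have hnotC : ∀ z, ¬ π.r m' z → mbl π z ≠ m' := fun z hz hq => hz (π.symm' (hmblne z m' hq))
      set T : Finset (Fin N × Fin N) :=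
        ((blkS π m ×ˢ blkS π m') ∪ (blkS π m' ×ˢ blkS π m)).filter
          (fun q : Fin N × Fin N => q.1 < q.2) with hTdef
      have hset : (@Finset.filter _ (fun q => ¬ (PA q ↔ PB q)) (fun a => propDecidable _)
          Finset.univ) = T ∪ {((m' : Fin N), m)} := by
        ext ⟨x, y⟩
        simp only [Finset.mem_filter, Finset.mem_univ, true_and, Finset.mem_union,
          Finset.mem_singleton, Finset.mem_product, mem_blkS, Prod.mk.injEq, hTdef]
        constructor
        · intro hq
          by_contra hc
          rw [not_or] at hc
          obtain ⟨hcT, hcS⟩ := hc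
          apply hq
          by_cases hrxy : π.r x y
          · simp only [hPAdef, hPBdef]
            exact iff_of_false (fun hk => hk.2.1 hrxy) (fun hk => hk.2.1 hrxy)
          by_cases hx : π.r m x
          · by_cases hy : π.r m' y
            · -- x ∈ B, y ∈ C : from hcT, ¬ x < y, both sides fail on order
              have hnlt : ¬ x < y := fun hlt => hcT ⟨Or.inl ⟨hx, hy⟩, hlt⟩
              have hn1 : ¬ (x = m ∧ y = m') := by
                rintro ⟨rfl, rfl⟩; exact hnlt hmm'
              have hn2 : x ≠ m' ∨ y ≠ m := Or.inl (fun hq2 => hBC (by rw [← hq2]; exact hx))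
              have ho := horder x y (not_and_or.1 hn1) hn2
              simp only [hPAdef, hPBdef]
              exact iff_of_false (fun hk => hnlt (ho.1 hk.1)) (fun hk => hnlt hk.1)
            · have hy' : ¬ π.r m y := fun hy2 => hrxy (π.trans' (π.symm' hx) hy2)
              refine hgen x y ?_ ?_ ?_
              · rintro ⟨-, hq2⟩; exact hy (by rw [hq2])
              · rintro ⟨hq1, -⟩; exact hBC (by rw [← hq1]; exact hx)
              · intro _
                rw [hvB2 x hx, hvB1 x hx, heq y hy' hy]
                have h9 := hvne _ _ (hnotC y hy)
                rw [hm'v] at h9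
                rw [Fin.lt_def, Fin.lt_def, hm'v]
                omega
          by_cases hx' : π.r m' x
          · by_cases hy : π.r m y
            · have hnlt : ¬ x < y := fun hlt => hcT ⟨Or.inr ⟨hx', hy⟩, hlt⟩
              have hn1 : x ≠ m ∨ y ≠ m' := Or.inl (fun hq2 => hCB (by rw [← hq2]; exact hx'))
              have hn2 : ¬ (x = m' ∧ y = m) := fun hq2 => hcS ⟨hq2.1, hq2.2⟩
              have ho := horder x y hn1 (not_and_or.1 hn2)
              simp only [hPAdef, hPBdef]
              exact iff_of_false (fun hk => hnlt (ho.1 hk.1)) (fun hk => hnlt hk.1)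
            · have hy' : ¬ π.r m' y := fun hy2 => hrxy (π.trans' (π.symm' hx') hy2)
              refine hgen x y ?_ ?_ ?_
              · rintro ⟨hq1, -⟩; exact hCB (by rw [← hq1]; exact hx')
              · rintro ⟨-, hq2⟩; exact hy (by rw [hq2])
              · intro _
                rw [hvC2 x hx', hvC1 x hx', heq y hy hy']
                have h9 := hvne _ _ (hnotC y hy')
                rw [hm'v] at h9
                rw [Fin.lt_def, Fin.lt_def, hm'v]
                omega
          · -- x outside both blocks
            have heqx : mbl τ (s x) = mbl π x := heq x hx hx'
            by_cases hy : π.r m y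
            · refine hgen x y ?_ ?_ ?_
              · rintro ⟨hq1, -⟩; exact hx (by rw [hq1])
              · rintro ⟨hq1, -⟩; exact hx' (by rw [hq1])
              · intro _
                rw [heqx, hvB2 y hy, hvB1 y hy]
                have h9 := hvne _ _ (hnotB x hx)
                rw [Fin.lt_def, Fin.lt_def, hm'v]
                omega
            by_cases hy' : π.r m' y
            · refine hgen x y ?_ ?_ ?_
              · rintro ⟨hq1, -⟩; exact hx (by rw [hq1])
              · rintro ⟨hq1, -⟩; exact hx' (by rw [hq1])
              · intro _
                rw [heqx, hvC2 y hy', hvC1 y hy']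
                have h9 := hvne _ _ (hnotB x hx)
                rw [Fin.lt_def, Fin.lt_def, hm'v]
                omega
            · refine hgen x y ?_ ?_ ?_
              · rintro ⟨hq1, -⟩; exact hx (by rw [hq1])
              · rintro ⟨hq1, -⟩; exact hx' (by rw [hq1])
              · intro _
                rw [heqx, heq y hy hy']
        · intro hmem
          rcases hmem with ⟨hd, hlt⟩ | ⟨rfl, rfl⟩
          · rcases hd with ⟨hx, hy⟩ | ⟨hx, hy⟩
            · -- x ∈ B, y ∈ C, x < y : PB true, PA false
              have hrxy : ¬ π.r x y := fun hr =>
                hBC (π.trans' hx (π.trans' hr (π.symm' hy)))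
              intro hiff
              have hPB : PB (x, y) := by
                simp only [hPBdef]
                refine ⟨hlt, hrxy, ?_⟩
                rw [hvB1 x hx, hvC1 y hy]
                exact hmm'
              have hPA := hiff.2 hPB
              simp only [hPAdef] at hPA
              rw [hvB2 x hx, hvC2 y hy] at hPA
              exact absurd hPA.2.2 (not_lt.2 hmm'.le)
            · -- x ∈ C, y ∈ B, x < y : PA true, PB false
              have hrxy : ¬ π.r x y := fun hr =>
                hBC (π.trans' hy (π.trans' (π.symm' hr) (π.symm' hx)))
              intro hiff
              have hn1 : x ≠ m ∨ y ≠ m' := Or.inl (fun hq2 => hCB (by rw [← hq2]; exact hx))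
              have hn2 : x ≠ m' ∨ y ≠ m := by
                by_contra hcon
                rw [not_or, not_not, not_not] at hcon
                rw [hcon.1, hcon.2] at hlt
                exact absurd hlt (not_lt.2 hmm'.le)
              have hPA : PA (x, y) := by
                simp only [hPAdef]
                refine ⟨(horder x y hn1 hn2).2 hlt, hrxy, ?_⟩
                rw [hvC2 x hx, hvB2 y hy]
                exact hmm'
              have hPB := hiff.1 hPA
              simp only [hPBdef] at hPB
              rw [hvC1 x hx, hvB1 y hy] at hPB
              exact absurd hPB.2.2 (not_lt.2 hmm'.le)
          · -- the pair (m', m)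
            intro hiff
            apply hPBm'm
            apply hiff.1
            rw [hPAm'm, hmbsm'2 hcc, hmbsm2 hb]
            exact hmm'
      have hTcd : T.card = (blkS π m).card * (blkS π m').card := by
        rw [← Finset.card_product]
        apply Finset.card_nbij' (fun q : Fin N × Fin N => if π.r m q.1 then q else (q.2, q.1))
          (fun q : Fin N × Fin N => if q.1 < q.2 then q else (q.2, q.1))
        · rintro ⟨u, v⟩ hm
          simp only [Finset.mem_coe] at hm ⊢
          rw [hTdef, Finset.mem_filter, Finset.mem_union, Finset.mem_product,
            Finset.mem_product, mem_blkS, mem_blkS, mem_blkS, mem_blkS] at hm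
          obtain ⟨⟨hu, hv⟩ | ⟨hu, hv⟩, hlt⟩ := hm
          · rw [if_pos hu]
            exact Finset.mem_product.2 ⟨mem_blkS.2 hu, mem_blkS.2 hv⟩
          · rw [if_neg (fun hq => hdisjBC u hq hu)]
            exact Finset.mem_product.2 ⟨mem_blkS.2 hv, mem_blkS.2 hu⟩
        · rintro ⟨u, v⟩ hm
          simp only [Finset.mem_coe] at hm ⊢
          rw [Finset.mem_product, mem_blkS, mem_blkS] at hm
          obtain ⟨hu, hv⟩ := hm
          have hne : u ≠ v := fun hq => hdisjBC u hu (hq ▸ hv)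
          rw [hTdef, Finset.mem_filter, Finset.mem_union, Finset.mem_product,
            Finset.mem_product, mem_blkS, mem_blkS, mem_blkS, mem_blkS]
          rcases Ne.lt_or_gt hne with hlt | hlt
          · rw [if_pos hlt]
            exact ⟨Or.inl ⟨hu, hv⟩, hlt⟩
          · rw [if_neg (not_lt.2 hlt.le)]
            exact ⟨Or.inr ⟨hv, hu⟩, hlt⟩
        · rintro ⟨u, v⟩ hm
          simp only [Finset.mem_coe] at hm ⊢
          rw [hTdef, Finset.mem_filter, Finset.mem_union, Finset.mem_product,
            Finset.mem_product, mem_blkS, mem_blkS, mem_blkS, mem_blkS] at hm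
          obtain ⟨⟨hu, hv⟩ | ⟨hu, hv⟩, hlt⟩ := hm
          · rw [if_pos hu, if_pos hlt]
          · rw [if_neg (fun hq => hdisjBC u hq hu), if_neg (not_lt.2 hlt.le)]
        · rintro ⟨u, v⟩ hm
          simp only [Finset.mem_coe] at hm ⊢
          rw [Finset.mem_product, mem_blkS, mem_blkS] at hm
          obtain ⟨hu, hv⟩ := hm
          have hne : u ≠ v := fun hq => hdisjBC u hu (hq ▸ hv)
          rcases Ne.lt_or_gt hne with hlt | hlt
          · rw [if_pos hlt, if_pos hu]
          · rw [if_neg (not_lt.2 hlt.le), if_neg (fun hq => hdisjBC v hq hv)]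
      have hm'mT : ((m' : Fin N), m) ∉ T := by
        rw [hTdef]
        intro hmem
        exact absurd (Finset.mem_filter.1 hmem).2 (not_lt.2 hmm'.le)
      rw [hset, Finset.card_union_of_disjoint (Finset.disjoint_singleton_right.2 hm'mT),
        Finset.card_singleton]
      have hevT : Even T.card := by
        rw [hTcd]
        exact (he m).mul_right _
      obtain ⟨k, hk⟩ := hevT
      omega
    · -- CASE 2 : b0 = m, c0 ≠ m' (hence c0 < m)
      have hc0ltm : (c0 : ℕ) < (m : ℕ) := by
        have h1 := hvne c0 m' hcc
        have h2 := hvne c0 m hc0m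
        rw [Fin.le_def, hm'v] at hc0le
        omega
      have heq : ∀ z, ¬ π.r m z → mbl τ (s z) = mbl π z := by
        intro z h1
        by_cases h2 : π.r m' z
        · rw [hconst z m' (π.symm' h2), hmbsm'1 hcc, hmblC z h2]
        · exact hout z (fun hr => h1 (π.symm' hr)) (fun hr => h2 (π.symm' hr))
      have hmid : ∀ x y : Fin N, ¬ π.r x y → (mbl τ (s x) < mbl τ (s y) ↔ mbl π x < mbl π y) := by
        intro x y hrxy
        by_cases hx : π.r m x
        · have hy : ¬ π.r m y := fun hy => hrxy (π.trans' (π.symm' hx) hy)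
          rw [hconst x m (π.symm' hx), hmbsm2 hb, hmblB x hx, heq y hy, hb]
          have hne : mbl π y ≠ m' := by
            intro hq
            have h2 := hmblC y (π.symm' (hmblne y m' hq))
            exact hcc (h2.symm.trans hq)
          rw [Fin.lt_def, Fin.lt_def, hm'v]
          have h9 := hvne _ _ hne
          rw [hm'v] at h9
          omega
        · by_cases hy : π.r m y
          · rw [hconst y m (π.symm' hy), hmbsm2 hb, hmblB y hy, heq x hx, hb]
            have hne : mbl π x ≠ m := fun hq => hx (π.symm' (hmblne x m hq))
            rw [Fin.lt_def, Fin.lt_def, hm'v]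
            have h9 := hvne _ _ hne
            omega
          · rw [heq x hx, heq y hy]
      have hset : (@Finset.filter _ (fun q => ¬ (PA q ↔ PB q)) (fun a => propDecidable _) Finset.univ)
          = {((m' : Fin N), m)} := by
        ext ⟨x, y⟩
        simp only [Finset.mem_filter, Finset.mem_univ, true_and, Finset.mem_singleton,
          Prod.mk.injEq]
        constructor
        · intro hq
          by_contra hc
          apply hq
          by_cases hn1 : x = m ∧ y = m'
          · obtain ⟨rfl, rfl⟩ := hn1
            apply iff_of_false hPAmm'
            intro hPB
            have h3 := (hPBmm').1 hPB
            rw [Fin.lt_def] at h3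
            omega
          · exact hgen x y hn1 (fun hq2 => hc ⟨hq2.1, hq2.2⟩) (hmid x y)
        · rintro ⟨rfl, rfl⟩
          intro hiff
          apply hPBm'm
          apply hiff.1
          rw [hPAm'm, hmbsm2 hb, hmbsm'1 hcc]
          rw [Fin.lt_def, hm'v]
          omega
      rw [hset, Finset.card_singleton]
  · by_cases hcc : c0 = m'
    · -- CASE 3 : b0 ≠ m (hence b0 < m), c0 = m'
      have hb0ltm : (b0 : ℕ) < (m : ℕ) := by
        have h2 := hvne b0 m hb
        rw [Fin.le_def] at hb0le
        omega
      have heq : ∀ z, ¬ π.r m' z → mbl τ (s z) = mbl π z := by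
        intro z h2
        by_cases h1 : π.r m z
        · rw [hconst z m (π.symm' h1), hmbsm1 hb, hmblB z h1]
        · exact hout z (fun hr => h1 (π.symm' hr)) (fun hr => h2 (π.symm' hr))
      have hmid : ∀ x y : Fin N, ¬ π.r x y → (mbl τ (s x) < mbl τ (s y) ↔ mbl π x < mbl π y) := by
        intro x y hrxy
        by_cases hx : π.r m' x
        · have hy : ¬ π.r m' y := fun hy => hrxy (π.trans' (π.symm' hx) hy)
          rw [hconst x m' (π.symm' hx), hmbsm'2 hcc, hmblC x hx, heq y hy, hcc]
          have hne : mbl π y ≠ m' := by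
            intro hq
            exact hy (π.symm' (hmblne y m' hq))
          rw [Fin.lt_def, Fin.lt_def, hm'v]
          have h9 := hvne _ _ hne
          rw [hm'v] at h9
          omega
        · by_cases hy : π.r m' y
          · rw [hconst y m' (π.symm' hy), hmbsm'2 hcc, hmblC y hy, heq x hx, hcc]
            have hne : mbl π x ≠ m := by
              intro hq
              have h2 := hmblB x (π.symm' (hmblne x m hq))
              exact hb (h2.symm.trans hq)
            rw [Fin.lt_def, Fin.lt_def, hm'v]
            have h9 := hvne _ _ hne
            omega
          · rw [heq x hx, heq y hy]
      have hset : (@Finset.filter _ (fun q => ¬ (PA q ↔ PB q)) (fun a => propDecidable _) Finset.univ)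
          = {((m : Fin N), m')} := by
        ext ⟨x, y⟩
        simp only [Finset.mem_filter, Finset.mem_univ, true_and, Finset.mem_singleton,
          Prod.mk.injEq]
        constructor
        · intro hq
          by_contra hc
          apply hq
          by_cases hn2 : x = m' ∧ y = m
          · obtain ⟨rfl, rfl⟩ := hn2
            apply iff_of_false _ hPBm'm
            rw [hPAm'm, hmbsm'2 hcc, hmbsm1 hb]
            rw [Fin.lt_def]
            omega
          · exact hgen x y (fun hq2 => hc ⟨hq2.1, hq2.2⟩) hn2 (hmid x y)
        · rintro ⟨rfl, rfl⟩
          intro hiff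
          apply hPAmm'
          apply hiff.2
          rw [hPBmm', hcc, Fin.lt_def, hm'v]
          omega
      rw [hset, Finset.card_singleton]
    · -- CASE 1 : b0 ≠ m, c0 ≠ m'
      have heq : ∀ z, mbl τ (s z) = mbl π z := by
        intro z
        by_cases h1 : π.r m z
        · rw [hconst z m (π.symm' h1), hmbsm1 hb, hmblB z h1]
        · by_cases h2 : π.r m' z
          · rw [hconst z m' (π.symm' h2), hmbsm'1 hcc, hmblC z h2]
          · exact hout z (fun hr => h1 (π.symm' hr)) (fun hr => h2 (π.symm' hr))
      have hmid : ∀ x y : Fin N, ¬ π.r x y → (mbl τ (s x) < mbl τ (s y) ↔ mbl π x < mbl π y) := by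
        intro x y _
        rw [heq x, heq y]
      rcases lt_or_gt_of_ne hb0c0 with hbc | hbc
      · have hset : (@Finset.filter _ (fun q => ¬ (PA q ↔ PB q)) (fun a => propDecidable _) Finset.univ)
            = {((m : Fin N), m')} := by
          ext ⟨x, y⟩
          simp only [Finset.mem_filter, Finset.mem_univ, true_and, Finset.mem_singleton,
            Prod.mk.injEq]
          constructor
          · intro hq
            by_contra hc
            apply hq
            by_cases hn2 : x = m' ∧ y = m
            · obtain ⟨rfl, rfl⟩ := hn2
              apply iff_of_false _ hPBm'm
              rw [hPAm'm, heq, heq]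
              exact not_lt.2 hbc.le
            · exact hgen x y (fun hq2 => hc ⟨hq2.1, hq2.2⟩) hn2 (hmid x y)
          · rintro ⟨rfl, rfl⟩
            intro hiff
            apply hPAmm'
            exact hiff.2 (hPBmm'.2 hbc)
        rw [hset, Finset.card_singleton]
      · have hset : (@Finset.filter _ (fun q => ¬ (PA q ↔ PB q)) (fun a => propDecidable _) Finset.univ)
            = {((m' : Fin N), m)} := by
          ext ⟨x, y⟩
          simp only [Finset.mem_filter, Finset.mem_univ, true_and, Finset.mem_singleton,
            Prod.mk.injEq]
          constructor
          · intro hq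
            by_contra hc
            apply hq
            by_cases hn1 : x = m ∧ y = m'
            · obtain ⟨rfl, rfl⟩ := hn1
              apply iff_of_false hPAmm'
              rw [hPBmm']
              exact not_lt.2 hbc.le
            · exact hgen x y hn1 (fun hq2 => hc ⟨hq2.1, hq2.2⟩) (hmid x y)
          · rintro ⟨rfl, rfl⟩
            intro hiff
            apply hPBm'm
            apply hiff.1
            rw [hPAm'm, heq, heq]
            exact hbc
        rw [hset, Finset.card_singleton]

lemma even_comap (π : Setoid (Fin N)) (g : Equiv.Perm (Fin N))
    (he : ∀ x, Even (Finset.univ.filter fun y => π.r x y).card) :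
    ∀ x, Even (Finset.univ.filter fun y => (Setoid.comap g π).r x y).card := by
  intro x
  have hcd : (Finset.univ.filter fun y => (Setoid.comap g π).r x y).card
      = (Finset.univ.filter fun y => π.r (g x) y).card := by
    apply Finset.card_nbij' (fun y => g y) (fun y => g.symm y)
    · intro y hy
      simp only [Finset.mem_coe, Finset.mem_filter, Finset.mem_univ, true_and] at hy ⊢
      exact hy
    · intro y hy
      simp only [Finset.mem_coe, Finset.mem_filter, Finset.mem_univ, true_and] at hy ⊢
      show π.r (g x) (g (g.symm y))
      rwa [g.apply_symm_apply]
    · intro y _; exact g.symm_apply_apply y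
    · intro y _; exact g.apply_symm_apply y
  rw [hcd]
  exact he (g x)

end EpsilonAux

open Classical in
/-- If `π` is a partition of `{1,…,2n}` with all blocks of even size, obtained from a
noncrossing partition `σ` with all blocks of even size by merging some of its blocks
(`σ ≤ π`), then the signature `ε(π) = 1`: the minimal number of adjacent switches needed to
make `π` noncrossing is even. -/
theorem epsilon_of_merged_noncrossing_even {n : ℕ} (π σ : Setoid (Fin (2 * n)))
    (hσNC : NCross σ)
    (hσeven : ∀ x, Even (Finset.univ.filter fun y => σ.r x y).card)
    (hmerge : σ ≤ π)
    (hπeven : ∀ x, Even (Finset.univ.filter fun y => π.r x y).card)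
    (c : ℕ) (hc : IsLeast {c | ReachesNC π c} c) : Even c := by
  classical
  obtain ⟨f, hf0, hfNC, hstep⟩ := hc.1
  have key : ∀ k : ℕ, ∀ hk : k < c + 1,
      (∀ x, Even (Finset.univ.filter fun y => (f ⟨k, hk⟩).r x y).card)
      ∧ (Jn (f ⟨k, hk⟩) + Jn π) % 2 = k % 2 := by
    intro k
    induction k with
    | zero =>
      intro hk
      have h0 : (⟨0, hk⟩ : Fin (c + 1)) = 0 := by
        ext; simp
      rw [h0, hf0]
      exact ⟨hπeven, by omega⟩
    | succ nn ih =>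
      intro hk
      have hn : nn < c + 1 := by omega
      have hnc : nn < c := by omega
      obtain ⟨ihe, ihp⟩ := ih hn
      have hstepn := hstep ⟨nn, hnc⟩
      have e1 : Fin.castSucc (⟨nn, hnc⟩ : Fin c) = (⟨nn, hn⟩ : Fin (c + 1)) := rfl
      have e2 : Fin.succ (⟨nn, hnc⟩ : Fin c) = (⟨nn + 1, hk⟩ : Fin (c + 1)) := rfl
      rw [e1, e2] at hstepn
      constructor
      · obtain ⟨mm, hmm, -, heq⟩ := hstepn
        rw [heq]
        exact even_comap _ _ ihe
      · have hflip := Jn_flip (f ⟨nn, hn⟩) (f ⟨nn + 1, hk⟩) ihe hstepn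
        omega
  have hklast := key c (by omega)
  have hlasteq : (⟨c, by omega⟩ : Fin (c + 1)) = Fin.last c := rfl
  have hNClast : NCross (f ⟨c, by omega⟩) := by rw [hlasteq]; exact hfNC
  have hevlast : Even (Jn (f ⟨c, by omega⟩)) :=
    Jn_even_of_merge _ _ hNClast hklast.1 le_rfl
  have hevπ : Even (Jn π) := Jn_even_of_merge π σ hσNC hσeven hmerge
  have hpar := hklast.2
  rw [Nat.even_iff] at hevlast hevπ ⊢
  omega
end

section
/- Let \Gamma be the quotient of the free group F_N by the relations abc = cba for all a, b, c in {g_1,...,g_N}. Then in \Gamma the elements g_i g_j^{-1} pairwise commute, and more generally any two products of generators of the same length commute up to the half-commutation relations; in particular the subgroup generated by all g_i g_1^{-1} is abelian. -/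
/-- The half-commutation relations `g_i g_j g_k = g_k g_j g_i` in the free group on `N`
generators. -/
def halfRels (N : ℕ) : Set (FreeGroup (Fin N)) :=
  {x | ∃ i j k : Fin N,
    x = FreeGroup.of i * FreeGroup.of j * FreeGroup.of k *
      (FreeGroup.of k * FreeGroup.of j * FreeGroup.of i)⁻¹}

/-- The basic half-commutation relation holds in the presented group. -/
lemma halfRels_rel (N : ℕ) (a b c : Fin N) :
    PresentedGroup.of (rels := halfRels N) a * PresentedGroup.of (rels := halfRels N) b *
      PresentedGroup.of (rels := halfRels N) c =
    PresentedGroup.of (rels := halfRels N) c * PresentedGroup.of (rels := halfRels N) b *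
      PresentedGroup.of (rels := halfRels N) a := by
  have hmem : (FreeGroup.of a * FreeGroup.of b * FreeGroup.of c *
      (FreeGroup.of c * FreeGroup.of b * FreeGroup.of a)⁻¹) ∈
      Subgroup.normalClosure (halfRels N) :=
    Subgroup.subset_normalClosure ⟨a, b, c, rfl⟩
  have h1 : PresentedGroup.mk (halfRels N)
      (FreeGroup.of a * FreeGroup.of b * FreeGroup.of c *
        (FreeGroup.of c * FreeGroup.of b * FreeGroup.of a)⁻¹) = 1 :=
    (QuotientGroup.eq_one_iff _).mpr hmem
  have h2 := h1
  rw [map_mul, map_inv, map_mul, map_mul, map_mul, map_mul, mul_inv_eq_one] at h2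
  exact h2

/-- In the quotient `Γ = F_N / (abc = cba)` (the half-classical torus dual `Z^{∘N}`), the
elements `g_i g_j⁻¹` pairwise commute: for all `i, j, k, l`, `g_i g_j⁻¹` and `g_k g_l⁻¹`
commute. -/
theorem half_liberated_quotient_commute (N : ℕ) (i j k l : Fin N) :
    Commute
      (PresentedGroup.of (rels := halfRels N) i * (PresentedGroup.of (rels := halfRels N) j)⁻¹)
      (PresentedGroup.of (rels := halfRels N) k * (PresentedGroup.of (rels := halfRels N) l)⁻¹) := by
  set x : Fin N → PresentedGroup (halfRels N) := PresentedGroup.of with hx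
  have h : ∀ a b c : Fin N, x a * x b * x c = x c * x b * x a := halfRels_rel N
  -- squares of generators commute with generators
  have hsq : ∀ a b : Fin N, Commute (x a * x a) (x b) := by
    intro a b
    have := h a a b
    simpa [mul_assoc, Commute, SemiconjBy] using this
  -- inverse of a generator, rewritten
  have hinv : ∀ a b : Fin N, (x a)⁻¹ * x b = x a * x b * (x a * x a)⁻¹ := by
    intro a b
    have := (hsq a b).inv_left.eq
    calc (x a)⁻¹ * x b = x a * ((x a * x a)⁻¹ * x b) := by group
      _ = x a * (x b * (x a * x a)⁻¹) := by rw [this]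
      _ = x a * x b * (x a * x a)⁻¹ := by group
  show x i * (x j)⁻¹ * (x k * (x l)⁻¹) = x k * (x l)⁻¹ * (x i * (x j)⁻¹)
  have hposs : x i * x j * (x k * x l) = x k * x l * (x i * x j) := by
    calc x i * x j * (x k * x l) = (x i * x j * x k) * x l := by group
      _ = (x k * x j * x i) * x l := by rw [h]
      _ = x k * (x j * x i * x l) := by group
      _ = x k * (x l * x i * x j) := by rw [h]
      _ = x k * x l * (x i * x j) := by group
  -- squares commute with squares (inverses)
  have hsqsq : Commute ((x j * x j)⁻¹) ((x l * x l)⁻¹) := by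
    have : Commute (x j * x j) (x l * x l) := ((hsq j l).mul_right (hsq j l))
    exact this.inv_inv
  have hjl : Commute ((x j * x j)⁻¹) (x l) := (hsq j l).inv_left
  have hli : Commute ((x l * x l)⁻¹) (x i) := (hsq l i).inv_left
  have hlj : Commute ((x l * x l)⁻¹) (x j) := (hsq l j).inv_left
  calc x i * (x j)⁻¹ * (x k * (x l)⁻¹)
      = x i * ((x j)⁻¹ * x k) * (x l)⁻¹ := by group
    _ = x i * (x j * x k * (x j * x j)⁻¹) * (x l * (x l * x l)⁻¹) := by
        rw [hinv j k]; group
    _ = x i * x j * x k * ((x j * x j)⁻¹ * x l) * (x l * x l)⁻¹ := by group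
    _ = x i * x j * x k * (x l * (x j * x j)⁻¹) * (x l * x l)⁻¹ := by rw [hjl.eq]
    _ = x i * x j * (x k * x l) * ((x j * x j)⁻¹ * (x l * x l)⁻¹) := by group
    _ = x k * x l * (x i * x j) * ((x l * x l)⁻¹ * (x j * x j)⁻¹) := by
        rw [hposs, hsqsq.eq]
    _ = x k * x l * x i * (x j * (x l * x l)⁻¹) * (x j * x j)⁻¹ := by group
    _ = x k * x l * x i * ((x l * x l)⁻¹ * x j) * (x j * x j)⁻¹ := by rw [hlj.eq]
    _ = x k * (x l * x i * (x l * x l)⁻¹) * (x j * (x j * x j)⁻¹) := by group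
    _ = x k * ((x l)⁻¹ * x i) * (x j * (x j * x j)⁻¹) := by rw [hinv l i]
    _ = x k * (x l)⁻¹ * (x i * (x j)⁻¹) := by group
end

section
/- For a perfect matching \pi of {1,...,2p} and the twisted map \bar T_\pi on (C^N)^{\otimes p} -> C defined using signed Kronecker symbols \bar\delta_\pi(i) = \varepsilon(\ker i) \delta_\pi(i) when \ker i \le \pi: if \pi is noncrossing, then \bar T_\pi = T_\pi, i.e., the twisted and untwisted maps coincide. -/
open Classical in
/-- The signature `ε(σ) ∈ {±1}` of a partition: `1` iff `σ` can be made noncrossing by an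
even number of adjacent switches. -/
noncomputable def epsilonSign {n : ℕ} (σ : Setoid (Fin n)) : ℤ :=
  if ∃ c, Even c ∧ ReachesNC σ c then 1 else -1

open Finset

section Aux
variable {n : ℕ}

open Classical in
noncomputable def cls (σ : Setoid (Fin n)) (x : Fin n) : Finset (Fin n) :=
  Finset.univ.filter fun y => σ.r x y

lemma mem_cls {σ : Setoid (Fin n)} {x y : Fin n} : y ∈ cls σ x ↔ σ.r x y := by
  simp [cls]

lemma cls_nonempty (σ : Setoid (Fin n)) (x : Fin n) : (cls σ x).Nonempty :=
  ⟨x, mem_cls.2 (σ.refl x)⟩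

noncomputable def mu (σ : Setoid (Fin n)) (x : Fin n) : Fin n :=
  (cls σ x).min' (cls_nonempty σ x)

lemma r_mu (σ : Setoid (Fin n)) (x : Fin n) : σ.r x (mu σ x) :=
  mem_cls.1 (Finset.min'_mem _ _)

lemma mu_le (σ : Setoid (Fin n)) (x : Fin n) : mu σ x ≤ x :=
  Finset.min'_le _ _ (mem_cls.2 (σ.refl x))

lemma mu_le_of_mem {σ : Setoid (Fin n)} {x y : Fin n} (h : σ.r x y) : mu σ x ≤ y :=
  Finset.min'_le _ _ (mem_cls.2 h)

lemma cls_eq_of_r {σ : Setoid (Fin n)} {x y : Fin n} (h : σ.r x y) : cls σ x = cls σ y := by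
  ext z
  simp only [mem_cls]
  exact ⟨fun hz => σ.trans (σ.symm h) hz, fun hz => σ.trans h hz⟩

lemma mu_congr {σ : Setoid (Fin n)} {x y : Fin n} (h : σ.r x y) : mu σ x = mu σ y := by
  simp only [mu, cls_eq_of_r h]

lemma r_of_mu_eq {σ : Setoid (Fin n)} {x y : Fin n} (h : mu σ x = mu σ y) : σ.r x y :=
  σ.trans (r_mu σ x) (h ▸ σ.symm (r_mu σ y))

open Classical in
noncomputable def invCount (σ : Setoid (Fin n)) : ℕ :=
  (Finset.univ.filter fun p : Fin n × Fin n => p.1 < p.2 ∧ mu σ p.2 < mu σ p.1).card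

lemma mem_invSet {σ : Setoid (Fin n)} {p : Fin n × Fin n} [∀ q : Fin n × Fin n, Decidable (q.1 < q.2 ∧ mu σ q.2 < mu σ q.1)] :
    p ∈ (Finset.univ.filter fun q : Fin n × Fin n => q.1 < q.2 ∧ mu σ q.2 < mu σ q.1) ↔
      p.1 < p.2 ∧ mu σ p.2 < mu σ p.1 := by
  simp

lemma ncross_of_invCount_zero {σ : Setoid (Fin n)} (h : invCount σ = 0) : NCross σ := by
  classical
  have hmono : ∀ x y : Fin n, x < y → mu σ x ≤ mu σ y := by
    intro x y hxy
    by_contra hc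
    push_neg at hc
    rw [invCount, Finset.card_eq_zero] at h
    have : (x, y) ∈ (Finset.univ.filter
        fun p : Fin n × Fin n => p.1 < p.2 ∧ mu σ p.2 < mu σ p.1) := by
      simp [hxy, hc]
    rw [h] at this; exact absurd this (Finset.notMem_empty _)
  rintro ⟨a, b, c, d, hab, hbc, hcd, hac, hbd, hnab⟩
  have h1 : mu σ a ≤ mu σ b := hmono a b hab
  have h2 : mu σ b ≤ mu σ c := hmono b c hbc
  have h3 : mu σ a = mu σ c := mu_congr hac
  exact hnab (r_of_mu_eq (le_antisymm h1 (h3 ▸ h2)))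

lemma exists_descent {σ : Setoid (Fin n)} (h : invCount σ ≠ 0) :
    ∃ (m : Fin n) (h' : (m : ℕ) + 1 < n), mu σ ⟨(m : ℕ) + 1, h'⟩ < mu σ m := by
  classical
  obtain ⟨p, hp⟩ := (Finset.card_ne_zero.1 (by rwa [invCount] at h)).exists_mem
  rw [Finset.mem_filter] at hp
  obtain ⟨-, hlt, hmu⟩ := hp
  -- strong induction on gap
  suffices H : ∀ g : ℕ, ∀ x y : Fin n, (y : ℕ) - (x : ℕ) ≤ g → x < y → mu σ y < mu σ x →
      ∃ (m : Fin n) (h' : (m : ℕ) + 1 < n), mu σ ⟨(m : ℕ) + 1, h'⟩ < mu σ m by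
    exact H ((p.2 : ℕ) - (p.1 : ℕ)) p.1 p.2 le_rfl hlt hmu
  intro g
  induction g with
  | zero =>
    intro x y hg hxy _
    exact absurd hg (by have := Fin.lt_def.1 hxy; omega)
  | succ g IH =>
    intro x y hg hxy hmu'
    have hx1 : (x : ℕ) + 1 < n := by
      have := y.isLt; have := (Fin.lt_def.1 hxy); omega
    set z : Fin n := ⟨(x : ℕ) + 1, hx1⟩ with hz
    by_cases hc : mu σ z < mu σ x
    · exact ⟨x, hx1, hc⟩
    · push_neg at hc
      have hzy : z < y ∨ z = y := by
        rcases lt_or_eq_of_le (show z ≤ y by rw [Fin.le_def]; have := Fin.lt_def.1 hxy; simp [hz]; omega) with h | h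
        · exact Or.inl h
        · exact Or.inr h
      rcases hzy with h | rfl
      · exact IH z y (by simp [hz]; have := Fin.lt_def.1 h; omega) h (lt_of_lt_of_le hmu' hc)
      · exact absurd (lt_of_lt_of_le hmu' hc) (lt_irrefl _)
end Aux
section Swap
variable {n : ℕ}

lemma swap_val {m m' : Fin n} (hm' : (m' : ℕ) = (m : ℕ) + 1) (x : Fin n) :
    ((Equiv.swap m m' x : Fin n) : ℕ) =
      if (x : ℕ) = (m : ℕ) then (m : ℕ) + 1
      else if (x : ℕ) = (m : ℕ) + 1 then (m : ℕ) else (x : ℕ) := by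
  rcases eq_or_ne x m with rfl | h1
  · simp [Equiv.swap_apply_left, hm']
  · rcases eq_or_ne x m' with rfl | h2
    · have hv : (x : ℕ) = (m : ℕ) + 1 := hm'
      simp [Equiv.swap_apply_right, hv]
    · rw [Equiv.swap_apply_of_ne_of_ne h1 h2]
      have v1 : (x : ℕ) ≠ (m : ℕ) := fun hv => h1 (Fin.ext hv)
      have v2 : (x : ℕ) ≠ (m : ℕ) + 1 := fun hv => h2 (Fin.ext (by rw [hv, hm']))
      simp [v1, v2]

lemma swap_lt_iff {m m' : Fin n} (hm' : (m' : ℕ) = (m : ℕ) + 1) {u v : Fin n}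
    (hu : (u : ℕ) ≠ (m : ℕ) + 1) (hv : (v : ℕ) ≠ (m : ℕ) + 1) :
    Equiv.swap m m' u < Equiv.swap m m' v ↔ u < v := by
  rw [Fin.lt_def, Fin.lt_def, swap_val hm', swap_val hm']
  split_ifs <;> omega

lemma swap_lt_of_lt {m m' : Fin n} (hm' : (m' : ℕ) = (m : ℕ) + 1) {x y : Fin n}
    (hxy : x < y) (hne : ¬(x = m ∧ y = m')) :
    Equiv.swap m m' x < Equiv.swap m m' y := by
  have hne' : ¬((x : ℕ) = (m : ℕ) ∧ (y : ℕ) = (m : ℕ) + 1) := by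
    rintro ⟨ha, hb⟩
    exact hne ⟨Fin.ext ha, Fin.ext (by rw [hb, hm'])⟩
  have hxy' := Fin.lt_def.1 hxy
  rw [Fin.lt_def, swap_val hm', swap_val hm']
  split_ifs <;> omega

lemma mu_ne {σ : Setoid (Fin n)} {m m' : Fin n} (hm' : (m' : ℕ) = (m : ℕ) + 1)
    (hd : mu σ m' < mu σ m) (z : Fin n) : mu σ z ≠ m' := by
  intro hz
  have h1 : σ.r z m' := hz ▸ r_mu σ z
  have h2 : mu σ m' = m' := by rw [← mu_congr h1, hz]
  have h3 : mu σ m' < m' := by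
    calc mu σ m' < mu σ m := hd
    _ ≤ m := mu_le σ m
    _ < m' := by rw [Fin.lt_def]; omega
  rw [h2] at h3; exact lt_irrefl _ h3

lemma mu_comap {σ : Setoid (Fin n)} {m m' : Fin n} (hm' : (m' : ℕ) = (m : ℕ) + 1)
    (hd : mu σ m' < mu σ m) (z : Fin n) :
    mu (Setoid.comap (Equiv.swap m m') σ) z
      = Equiv.swap m m' (mu σ (Equiv.swap m m' z)) := by
  classical
  set s := Equiv.swap m m' with hs
  have hcls : cls (Setoid.comap s σ) z = (cls σ (s z)).image s := by
    ext y
    simp only [mem_cls, Finset.mem_image]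
    constructor
    · intro hy
      exact ⟨s y, hy, Equiv.swap_apply_self _ _ _⟩
    · rintro ⟨x, hx, rfl⟩
      show σ.r (s z) (s (s x))
      rwa [Equiv.swap_apply_self]
  have hmu : mu (Setoid.comap s σ) z = ((cls σ (s z)).image s).min'
      (by rw [← hcls]; exact cls_nonempty _ _) := by
    simp only [mu, hcls]
  rw [hmu]
  set A := cls σ (s z) with hA
  have haA : mu σ (s z) ∈ A := Finset.min'_mem _ _
  have hane : mu σ (s z) ≠ m' := mu_ne hm' hd _
  apply le_antisymm
  · exact Finset.min'_le _ _ (Finset.mem_image_of_mem s haA)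
  · apply Finset.le_min'
    intro y hy
    obtain ⟨x, hx, rfl⟩ := Finset.mem_image.1 hy
    have hax : mu σ (s z) ≤ x := Finset.min'_le _ _ hx
    -- rule out (mu σ (s z)) = m ∧ x = m'
    have hbad : ¬((mu σ (s z) : ℕ) = (m : ℕ) ∧ (x : ℕ) = (m : ℕ) + 1) := by
      rintro ⟨h1, h2⟩
      have hm : m ∈ A := Fin.ext h1 ▸ haA
      have hx' : m' ∈ A := by
        have : x = m' := Fin.ext (by rw [h2, hm'])
        exact this ▸ hx
      have : σ.r m m' := σ.trans (σ.symm (mem_cls.1 hm)) (mem_cls.1 hx')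
      rw [mu_congr this] at hd
      exact lt_irrefl _ hd
    have hane' : (mu σ (s z) : ℕ) ≠ (m : ℕ) + 1 := fun hv => hane (Fin.ext (by rw [hv, hm']))
    have hax' := Fin.le_def.1 hax
    rw [Fin.le_def, swap_val hm', swap_val hm']
    split_ifs <;> omega

lemma invCount_comap {σ : Setoid (Fin n)} {m m' : Fin n} (hm' : (m' : ℕ) = (m : ℕ) + 1)
    (hd : mu σ m' < mu σ m) :
    invCount (Setoid.comap (Equiv.swap m m') σ) + 1 = invCount σ := by
  classical
  set s := Equiv.swap m m' with hs
  have hss : ∀ x : Fin n, s (s x) = x := fun x => Equiv.swap_apply_self _ _ _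
  have hmd : m < m' := by rw [Fin.lt_def]; omega
  have hfilter : (Finset.univ.filter fun p : Fin n × Fin n =>
        p.1 < p.2 ∧ mu (Setoid.comap s σ) p.2 < mu (Setoid.comap s σ) p.1)
      = (Finset.univ.filter fun p : Fin n × Fin n =>
        p.1 < p.2 ∧ mu σ (s p.2) < mu σ (s p.1)) := by
    apply Finset.filter_congr
    intro p _
    rw [mu_comap hm' hd, mu_comap hm' hd]
    constructor
    · rintro ⟨h1, h2⟩
      refine ⟨h1, ?_⟩
      rwa [swap_lt_iff hm' (fun hv => mu_ne hm' hd _ (Fin.ext (by rw [hv, hm'])))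
        (fun hv => mu_ne hm' hd _ (Fin.ext (by rw [hv, hm'])))] at h2
    · rintro ⟨h1, h2⟩
      refine ⟨h1, ?_⟩
      rwa [swap_lt_iff hm' (fun hv => mu_ne hm' hd _ (Fin.ext (by rw [hv, hm'])))
        (fun hv => mu_ne hm' hd _ (Fin.ext (by rw [hv, hm'])))]
  set A := Finset.univ.filter fun p : Fin n × Fin n => p.1 < p.2 ∧ mu σ p.2 < mu σ p.1 with hAdef
  have hmem : (m, m') ∈ A := by
    rw [hAdef, Finset.mem_filter]
    exact ⟨Finset.mem_univ _, hmd, hd⟩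
  have hcard : (Finset.univ.filter fun p : Fin n × Fin n =>
        p.1 < p.2 ∧ mu σ (s p.2) < mu σ (s p.1)).card = (A.erase (m, m')).card := by
    apply Finset.card_bij' (i := fun p _ => (s p.1, s p.2)) (j := fun p _ => (s p.1, s p.2))
    · intro p hp
      rw [Finset.mem_filter] at hp
      obtain ⟨-, h1, h2⟩ := hp
      have hpne : ¬(p.1 = m ∧ p.2 = m') := by
        rintro ⟨ha, hb⟩
        rw [ha, hb] at h2
        rw [Equiv.swap_apply_left, Equiv.swap_apply_right] at h2
        exact lt_irrefl _ (h2.trans hd)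
      refine Finset.mem_erase.2 ⟨?_, ?_⟩
      · intro hq
        have ha : p.1 = m' := by
          have := congrArg Prod.fst hq
          simp only at this
          rw [← hss p.1, this, Equiv.swap_apply_left]
        have hb : p.2 = m := by
          have := congrArg Prod.snd hq
          simp only at this
          rw [← hss p.2, this, Equiv.swap_apply_right]
        rw [ha, hb] at h1
        exact absurd (h1.trans hmd) (lt_irrefl _)
      · rw [hAdef, Finset.mem_filter]
        exact ⟨Finset.mem_univ _, swap_lt_of_lt hm' h1 hpne, h2⟩
    · intro q hq
      rw [Finset.mem_erase, hAdef, Finset.mem_filter] at hq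
      obtain ⟨hqne, -, h1, h2⟩ := hq
      rw [Finset.mem_filter]
      refine ⟨Finset.mem_univ _, ?_, ?_⟩
      · apply swap_lt_of_lt hm' h1
        rintro ⟨ha, hb⟩
        exact hqne (Prod.ext ha hb)
      · rw [hss, hss]; exact h2
    · intro p _; ext <;> simp [hss]
    · intro q _; ext <;> simp [hss]
  have hA1 : 1 ≤ A.card := Finset.card_pos.2 ⟨_, hmem⟩
  have := Finset.card_erase_of_mem hmem
  rw [invCount, hfilter, hcard, this]
  rw [invCount, ← hAdef]
  omega

end Swap
section Reach
variable {n : ℕ}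

lemma reachesNC_invCount : ∀ (k : ℕ) (σ : Setoid (Fin n)), invCount σ = k → ReachesNC σ k := by
  intro k
  induction k with
  | zero =>
    intro σ h
    exact ⟨fun _ => σ, rfl, ncross_of_invCount_zero h, fun i => i.elim0⟩
  | succ k IH =>
    intro σ h
    obtain ⟨m, h', hd⟩ := exists_descent (σ := σ) (by omega)
    have hswitch : SwitchStep σ (Setoid.comap (Equiv.swap m ⟨(m : ℕ) + 1, h'⟩) σ) := by
      refine ⟨m, h', fun hr => ?_, rfl⟩
      rw [mu_congr hr] at hd
      exact lt_irrefl _ hd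
    have hcount : invCount (Setoid.comap (Equiv.swap m ⟨(m : ℕ) + 1, h'⟩) σ) = k := by
      have := invCount_comap (m := m) (m' := ⟨(m : ℕ) + 1, h'⟩) rfl hd
      omega
    obtain ⟨f, hf0, hfNC, hfs⟩ := IH _ hcount
    refine ⟨Fin.cases σ f, by simp, ?_, ?_⟩
    · show NCross (Fin.cases σ f (Fin.last (k + 1)))
      rw [← Fin.succ_last]
      simp only [Fin.cases_succ]
      exact hfNC
    · intro i
      induction i using Fin.cases with
      | zero =>
        show SwitchStep (Fin.cases σ f (Fin.castSucc 0)) (Fin.cases σ f (Fin.succ 0))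
        simp only [Fin.castSucc_zero, Fin.cases_zero, Fin.cases_succ, hf0]
        exact hswitch
      | succ j =>
        show SwitchStep (Fin.cases σ f (Fin.castSucc (Fin.succ j)))
          (Fin.cases σ f (Fin.succ (Fin.succ j)))
        rw [← Fin.succ_castSucc]
        simp only [Fin.cases_succ]
        exact hfs j

end Reach

section Even

lemma even_card_invol {α : Type*} [DecidableEq α] :
    ∀ (S : Finset α) (T : α → α), (∀ x ∈ S, T x ∈ S) → (∀ x ∈ S, T (T x) = x) →
    (∀ x ∈ S, T x ≠ x) → Even S.card := by
  intro S
  induction S using Finset.strongInduction with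
  | _ S IH =>
    intro T h1 h2 h3
    rcases S.eq_empty_or_nonempty with rfl | ⟨x, hx⟩
    · simp
    · have hTx : T x ∈ S := h1 x hx
      have hTxx : T x ≠ x := h3 x hx
      set S' := (S.erase x).erase (T x) with hS'
      have hsub : S' ⊂ S := by
        refine ⟨(Finset.erase_subset _ _).trans (Finset.erase_subset _ _), fun hsup => ?_⟩
        have := hsup hx
        rw [hS', Finset.mem_erase, Finset.mem_erase] at this
        exact this.2.1 rfl
      have hcard : S.card = S'.card + 2 := by
        have h2le : 1 < S.card := Finset.one_lt_card.2 ⟨x, hx, T x, hTx, Ne.symm hTxx⟩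
        rw [hS', Finset.card_erase_of_mem (Finset.mem_erase.2 ⟨hTxx, hTx⟩),
          Finset.card_erase_of_mem hx]
        omega
      have hmem' : ∀ y ∈ S', y ∈ S ∧ y ≠ x ∧ y ≠ T x := by
        intro y hy
        rw [hS', Finset.mem_erase, Finset.mem_erase] at hy
        exact ⟨hy.2.2, hy.2.1, hy.1⟩
      have h1' : ∀ y ∈ S', T y ∈ S' := by
        intro y hy
        obtain ⟨hyS, hyx, hyTx⟩ := hmem' y hy
        rw [hS', Finset.mem_erase, Finset.mem_erase]
        refine ⟨fun hc => hyx ?_, fun hc => hyTx ?_, h1 y hyS⟩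
        · rw [← h2 y hyS, hc, h2 x hx]
        · rw [← h2 y hyS, hc]
      have heven := IH S' hsub T h1'
        (fun y hy => h2 y (hmem' y hy).1) (fun y hy => h3 y (hmem' y hy).1)
      rw [hcard]
      exact heven.add even_two

open Classical in
lemma even_invCount {n : ℕ} (σ : Setoid (Fin n)) (π : Equiv.Perm (Fin n))
    (hinv : ∀ i, π (π i) = i) (hfix : ∀ i, π i ≠ i)
    (hNC : ¬ ∃ a c : Fin n, a < c ∧ c < π a ∧ π a < π c)
    (harc : ∀ x, σ.r x (π x)) : Even (invCount σ) := by
  have hcross : ∀ a c : Fin n, a < c → c < π a → π a < π c → False :=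
    fun a c ha hb hc => hNC ⟨a, c, ha, hb, hc⟩
  have hmuπ : ∀ x, mu σ (π x) = mu σ x := fun x => (mu_congr (harc x)).symm
  rw [invCount]
  apply even_card_invol _ (fun q : Fin n × Fin n => if q.1 < π q.2 then (q.1, π q.2) else (π q.1, q.2))
  · intro q hq
    rw [Finset.mem_filter] at hq
    obtain ⟨-, hq1, hq2⟩ := hq
    have hne12 : π q.2 ≠ q.1 := by
      intro hc
      rw [← hc, hmuπ] at hq2
      exact lt_irrefl _ hq2
    have hne21 : π q.1 ≠ q.2 := by
      intro hc
      rw [← hc, hmuπ] at hq2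
      exact lt_irrefl _ hq2
    by_cases hlt : q.1 < π q.2
    · rw [if_pos hlt, Finset.mem_filter]
      exact ⟨Finset.mem_univ _, hlt, by rw [hmuπ]; exact hq2⟩
    · rw [if_neg hlt, Finset.mem_filter]
      have hlt2 : π q.2 < q.1 := lt_of_le_of_ne (not_lt.1 hlt) hne12
      have hcl : π q.1 < q.2 := by
        by_contra hc
        have : q.2 < π q.1 := lt_of_le_of_ne (not_lt.1 hc) (Ne.symm hne21)
        exact hcross (π q.2) q.1 hlt2 (by rw [hinv]; exact hq1.trans_le le_rfl)
          (by rw [hinv]; exact this)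
      exact ⟨Finset.mem_univ _, hcl, by rw [hmuπ]; exact hq2⟩
  · intro q hq
    rw [Finset.mem_filter] at hq
    obtain ⟨-, hq1, hq2⟩ := hq
    have hne12 : π q.2 ≠ q.1 := by
      intro hc; rw [← hc, hmuπ] at hq2; exact lt_irrefl _ hq2
    by_cases hlt : q.1 < π q.2
    · rw [if_pos hlt]
      have hcond : q.1 < π (π q.2) := by rw [hinv]; exact hq1
      simp only [if_pos hcond]
      rw [hinv]
    · rw [if_neg hlt]
      have hlt2 : π q.2 < q.1 := lt_of_le_of_ne (not_lt.1 hlt) hne12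
      have hcond : ¬ (π q.1 < π q.2) := by
        intro hc
        exact hcross (π q.1) (π q.2) hc (by rw [hinv]; exact hlt2)
          (by rw [hinv, hinv]; exact hq1)
      simp only [if_neg hcond]
      rw [hinv]
  · intro q hq hc
    by_cases hlt : q.1 < π q.2
    · rw [if_pos hlt] at hc
      exact hfix q.2 (congrArg Prod.snd hc)
    · rw [if_neg hlt] at hc
      exact hfix q.1 (congrArg Prod.fst hc)

end Even
/-- For a noncrossing perfect matching `π` of `{1,…,2p}` (a fixed-point-free involution with
no crossing), the twisted map `\bar T_π`, built from the signed Kronecker symbols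
`\barδ_π(i) = ε(ker i) δ_π(i)`, coincides with the untwisted map `T_π`. -/
theorem twisted_eq_untwisted_of_noncrossing {p N : ℕ} (π : Equiv.Perm (Fin (2 * p)))
    (hinv : ∀ i, π (π i) = i) (hfix : ∀ i, π i ≠ i)
    (hNC : ¬ ∃ a c : Fin (2 * p), a < c ∧ c < π a ∧ π a < π c) :
    (fun v : (Fin (2 * p) → Fin N) → ℂ =>
        ∑ i : Fin (2 * p) → Fin N,
          (if ∀ a, i (π a) = i a then (epsilonSign (Setoid.ker i) : ℂ) else 0) * v i)
      = fun v : (Fin (2 * p) → Fin N) → ℂ =>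
          ∑ i : Fin (2 * p) → Fin N, (if ∀ a, i (π a) = i a then (1 : ℂ) else 0) * v i := by

  funext v
  apply Finset.sum_congr rfl
  intro i _
  congr 1
  split_ifs with hi
  · have harc : ∀ x, (Setoid.ker i).r x (π x) := fun x => (hi x).symm
    have he : Even (invCount (Setoid.ker i)) := even_invCount _ π hinv hfix hNC harc
    have hr : ReachesNC (Setoid.ker i) (invCount (Setoid.ker i)) :=
      reachesNC_invCount _ _ rfl
    have hes : epsilonSign (Setoid.ker i) = 1 := by
      unfold epsilonSign
      rw [if_pos ⟨invCount (Setoid.ker i), he, hr⟩]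
    rw [hes]
    norm_num
  · rfl
end
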